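/- arXiv:1703.01539 — 11 statements merged into one kernel-verified Lean document; each statement's English description precedes it below -/
import Mathlib

section
/- Let X be a metric space, A a finite subset of X partitioned as A = A_1 ⊎ ⋯ ⊎ A_s with each A_i nonempty, and let k ≥ 1, t ≥ 0 be integers with t ≤ |A|. Let K* ⊆ A (nonempty, |K*| ≤ k) and O* ⊆ A (|O*| ≤ t) attain the (k,t)-median cost Cmed(A,k,t), and set t_i* = |O* ∩ A_i| for each i. Then ∑_{i=1}^s Cmed(A_i, k, t_i*) ≤ 2·Cmed(A, k, t). -/
open Metric Finset

/-- The (k,t)-median cost of a finite point set `S`: the minimum over nonempty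
`K ⊆ S` with `|K| ≤ k` and `O ⊆ S` with `|O| ≤ t` of `∑_{p ∈ S \ O} d(p, K)`. -/
noncomputable def medCost {X : Type*} [MetricSpace X] [DecidableEq X]
    (S : Finset X) (k t : ℕ) : ℝ :=
  sInf { c : ℝ | ∃ K O : Finset X, K ⊆ S ∧ K.Nonempty ∧ K.card ≤ k ∧
    O ⊆ S ∧ O.card ≤ t ∧ c = ∑ p ∈ S \ O, infDist p (K : Set X) }

theorem sum_local_medCost_le {X : Type*} [MetricSpace X] [DecidableEq X]
    {s : ℕ} (𝒜 : Fin s → Finset X)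
    (hdisj : ∀ i j, i ≠ j → Disjoint (𝒜 i) (𝒜 j))
    (hne : ∀ i, (𝒜 i).Nonempty)
    (A : Finset X) (hA : A = Finset.univ.biUnion 𝒜)
    (k t : ℕ) (hk : 1 ≤ k) (ht : t ≤ A.card)
    (Kstar Ostar : Finset X)
    (hK1 : Kstar ⊆ A) (hK2 : Kstar.Nonempty) (hK3 : Kstar.card ≤ k)
    (hO1 : Ostar ⊆ A) (hO2 : Ostar.card ≤ t)
    (hopt : (∑ p ∈ A \ Ostar, infDist p (Kstar : Set X)) = medCost A k t) :
    ∑ i, medCost (𝒜 i) k ((Ostar ∩ 𝒜 i).card) ≤ 2 * medCost A k t := by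
  classical
  have key : ∀ i : Fin s, medCost (𝒜 i) k ((Ostar ∩ 𝒜 i).card) ≤
      2 * ∑ p ∈ 𝒜 i \ Ostar, infDist p (Kstar : Set X) := by
    intro i
    choose f hf1 hf2 using fun c : X =>
      Finset.exists_min_image (𝒜 i) (fun q => dist c q) (hne i)
    set Ki := Kstar.image f with hKi
    have hKi_sub : Ki ⊆ 𝒜 i := by
      intro x hx
      simp only [hKi, Finset.mem_image] at hx
      obtain ⟨c, -, rfl⟩ := hx
      exact hf1 c
    have hKi_ne : Ki.Nonempty := hK2.image f
    have hKi_card : Ki.card ≤ k := Finset.card_image_le.trans hK3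
    have hcost : medCost (𝒜 i) k ((Ostar ∩ 𝒜 i).card) ≤
        ∑ p ∈ 𝒜 i \ (Ostar ∩ 𝒜 i), infDist p (Ki : Set X) := by
      apply csInf_le
      · refine ⟨0, ?_⟩
        rintro c ⟨K, O, -, -, -, -, -, rfl⟩
        exact Finset.sum_nonneg fun p _ => infDist_nonneg
      · exact ⟨Ki, Ostar ∩ 𝒜 i, hKi_sub, hKi_ne, hKi_card,
          Finset.inter_subset_right, le_rfl, rfl⟩
    have hset : 𝒜 i \ (Ostar ∩ 𝒜 i) = 𝒜 i \ Ostar := by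
      ext x; simp only [Finset.mem_sdiff, Finset.mem_inter]; tauto
    rw [hset] at hcost
    refine hcost.trans ?_
    rw [Finset.mul_sum]
    apply Finset.sum_le_sum
    intro p hp
    have hp_i : p ∈ 𝒜 i := (Finset.mem_sdiff.1 hp).1
    obtain ⟨c, hc, hcd⟩ := (Kstar.finite_toSet.isCompact).exists_infDist_eq_dist
      (by exact_mod_cast hK2.to_set) p
    have hcK : c ∈ Kstar := by exact_mod_cast hc
    have h1 : infDist p (Ki : Set X) ≤ dist p (f c) :=
      infDist_le_dist_of_mem (by exact_mod_cast Finset.mem_image_of_mem f hcK)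
    have h2 : dist p (f c) ≤ dist p c + dist c (f c) := dist_triangle _ _ _
    have h3 : dist c (f c) ≤ dist c p := hf2 c p hp_i
    rw [hcd]
    calc infDist p (Ki : Set X) ≤ dist p c + dist c p := by linarith
      _ = 2 * dist p c := by rw [dist_comm c p]; ring
  have hsum : ∑ i, ∑ p ∈ 𝒜 i \ Ostar, infDist p (Kstar : Set X)
      = ∑ p ∈ A \ Ostar, infDist p (Kstar : Set X) := by
    have hAO : A \ Ostar = Finset.univ.biUnion (fun i => 𝒜 i \ Ostar) := by
      subst hA
      ext x
      simp only [Finset.mem_sdiff, Finset.mem_biUnion, Finset.mem_univ, true_and]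
      tauto
    rw [hAO, Finset.sum_biUnion]
    intro i _ j _ hij
    exact (hdisj i j hij).mono (Finset.sdiff_subset) (Finset.sdiff_subset)
  calc ∑ i, medCost (𝒜 i) k ((Ostar ∩ 𝒜 i).card)
      ≤ ∑ i, 2 * ∑ p ∈ 𝒜 i \ Ostar, infDist p (Kstar : Set X) :=
        Finset.sum_le_sum fun i _ => key i
    _ = 2 * ∑ i, ∑ p ∈ 𝒜 i \ Ostar, infDist p (Kstar : Set X) := by
        rw [Finset.mul_sum]
    _ = 2 * medCost A k t := by rw [hsum, hopt]
end

section
/- Let X be a metric space, A a finite subset of X partitioned as A = A_1 ⊎ ⋯ ⊎ A_s with each A_i nonempty, and let k ≥ 1, t ≥ 0 be integers with t ≤ |A|. Let K* ⊆ A (nonempty, |K*| ≤ k) and O* ⊆ A (|O*| ≤ t) attain the (k,t)-means cost Cmns(A,k,t), and set t_i* = |O* ∩ A_i| for each i. Then ∑_{i=1}^s Cmns(A_i, k, t_i*) ≤ 4·Cmns(A, k, t). -/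
open Metric Finset

/-- The (k,t)-means cost of a finite point set `S`: the minimum over nonempty
`K ⊆ S` with `|K| ≤ k` and `O ⊆ S` with `|O| ≤ t` of `∑_{p ∈ S \ O} d(p, K)²`. -/
noncomputable def meansCost {X : Type*} [MetricSpace X] [DecidableEq X]
    (S : Finset X) (k t : ℕ) : ℝ :=
  sInf { c : ℝ | ∃ K O : Finset X, K ⊆ S ∧ K.Nonempty ∧ K.card ≤ k ∧
    O ⊆ S ∧ O.card ≤ t ∧ c = ∑ p ∈ S \ O, (infDist p (K : Set X)) ^ 2 }

lemma meansCost_le_of {X : Type*} [MetricSpace X] [DecidableEq X]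
    (S : Finset X) (k t : ℕ) (K O : Finset X)
    (hK1 : K ⊆ S) (hK2 : K.Nonempty) (hK3 : K.card ≤ k)
    (hO1 : O ⊆ S) (hO2 : O.card ≤ t) :
    meansCost S k t ≤ ∑ p ∈ S \ O, (infDist p (K : Set X)) ^ 2 := by
  apply csInf_le
  · refine ⟨0, ?_⟩
    rintro c ⟨K', O', _, _, _, _, _, rfl⟩
    exact Finset.sum_nonneg fun p _ => sq_nonneg _
  · exact ⟨K, O, hK1, hK2, hK3, hO1, hO2, rfl⟩

theorem sum_local_meansCost_le {X : Type*} [MetricSpace X] [DecidableEq X]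
    {s : ℕ} (𝒜 : Fin s → Finset X)
    (hdisj : ∀ i j, i ≠ j → Disjoint (𝒜 i) (𝒜 j))
    (hne : ∀ i, (𝒜 i).Nonempty)
    (A : Finset X) (hA : A = Finset.univ.biUnion 𝒜)
    (k t : ℕ) (hk : 1 ≤ k) (ht : t ≤ A.card)
    (Kstar Ostar : Finset X)
    (hK1 : Kstar ⊆ A) (hK2 : Kstar.Nonempty) (hK3 : Kstar.card ≤ k)
    (hO1 : Ostar ⊆ A) (hO2 : Ostar.card ≤ t)
    (hopt : (∑ p ∈ A \ Ostar, (infDist p (Kstar : Set X)) ^ 2) = meansCost A k t) :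
    ∑ i, meansCost (𝒜 i) k ((Ostar ∩ 𝒜 i).card) ≤ 4 * meansCost A k t := by
  have key : ∀ i, meansCost (𝒜 i) k ((Ostar ∩ 𝒜 i).card) ≤
      4 * ∑ p ∈ 𝒜 i \ Ostar, (infDist p (Kstar : Set X)) ^ 2 := by
    intro i
    have hOsub : Ostar ∩ 𝒜 i ⊆ 𝒜 i := inter_subset_right
    have hsd : 𝒜 i \ (Ostar ∩ 𝒜 i) = 𝒜 i \ Ostar := by
      ext p; simp only [mem_sdiff, mem_inter]; tauto
    by_cases hB : (𝒜 i \ Ostar).Nonempty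
    · have hchoice : ∀ c : X, ∃ q ∈ 𝒜 i \ Ostar, ∀ r ∈ 𝒜 i \ Ostar,
          dist c q ≤ dist c r :=
        fun c => Finset.exists_min_image _ (fun r => dist c r) hB
      choose n hn1 hn2 using hchoice
      have hKisub : Kstar.image n ⊆ 𝒜 i := by
        intro x hx
        obtain ⟨c, _, rfl⟩ := mem_image.1 hx
        exact (mem_sdiff.1 (hn1 c)).1
      have hle := meansCost_le_of (𝒜 i) k ((Ostar ∩ 𝒜 i).card)
        (Kstar.image n) (Ostar ∩ 𝒜 i) hKisub (hK2.image n)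
        (card_image_le.trans hK3) hOsub le_rfl
      rw [hsd] at hle
      refine hle.trans ?_
      rw [Finset.mul_sum]
      apply Finset.sum_le_sum
      intro p hp
      obtain ⟨c, hc', hdc⟩ := (Kstar.finite_toSet.isCompact).exists_infDist_eq_dist
        (by exact_mod_cast hK2.to_set) p
      have hc : c ∈ Kstar := by exact_mod_cast hc'
      have h1 : infDist p ((Kstar.image n : Finset X) : Set X) ≤ 2 * dist p c := by
        have hmem : n c ∈ ((Kstar.image n : Finset X) : Set X) := by
          exact_mod_cast mem_image_of_mem n hc
        refine (infDist_le_dist_of_mem hmem).trans ?_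
        calc dist p (n c) ≤ dist p c + dist c (n c) := dist_triangle _ _ _
          _ ≤ dist p c + dist c p := by
              have := hn2 c p hp
              linarith
          _ = 2 * dist p c := by rw [dist_comm c p]; ring
      have h0 : (0:ℝ) ≤ infDist p ((Kstar.image n : Finset X) : Set X) :=
        infDist_nonneg
      calc infDist p ((Kstar.image n : Finset X) : Set X) ^ 2
          ≤ (2 * dist p c) ^ 2 := by nlinarith
        _ = 4 * (infDist p (Kstar : Set X)) ^ 2 := by rw [hdc]; ring
    · have hempty : 𝒜 i \ Ostar = ∅ := not_nonempty_iff_eq_empty.1 hB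
      have h0 : meansCost (𝒜 i) k ((Ostar ∩ 𝒜 i).card) ≤ 0 := by
        have := meansCost_le_of (𝒜 i) k ((Ostar ∩ 𝒜 i).card)
          {(hne i).choose} (Ostar ∩ 𝒜 i)
          (by simpa using (hne i).choose_spec) (singleton_nonempty _)
          (by simpa using hk) hOsub le_rfl
        rwa [hsd, hempty, Finset.sum_empty] at this
      calc meansCost (𝒜 i) k ((Ostar ∩ 𝒜 i).card) ≤ 0 := h0
        _ ≤ _ := by rw [hempty, Finset.sum_empty, mul_zero]
  calc ∑ i, meansCost (𝒜 i) k ((Ostar ∩ 𝒜 i).card)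
      ≤ ∑ i, 4 * ∑ p ∈ 𝒜 i \ Ostar, (infDist p (Kstar : Set X)) ^ 2 :=
        Finset.sum_le_sum fun i _ => key i
    _ = 4 * ∑ i, ∑ p ∈ 𝒜 i \ Ostar, (infDist p (Kstar : Set X)) ^ 2 := by
        rw [Finset.mul_sum]
    _ = 4 * ∑ p ∈ A \ Ostar, (infDist p (Kstar : Set X)) ^ 2 := by
        have hAO : A \ Ostar = Finset.univ.biUnion (fun i => 𝒜 i \ Ostar) := by
          subst hA
          ext p
          simp only [mem_sdiff, mem_biUnion, mem_univ, true_and]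
          tauto
        rw [hAO, Finset.sum_biUnion fun a _ b _ hab =>
          (hdisj a b hab).mono sdiff_subset sdiff_subset]
    _ = 4 * meansCost A k t := by rw [hopt]
end

section
/- Let X be a metric space, A a finite set of n points of X, and K_1, K_2 nonempty finite subsets of X. Let t_1 < t_2 ≤ n be nonnegative integers, P_1, P_2 ⊆ A with |P_1| = n − t_1 and |P_2| = n − t_2, and π_1 : P_1 → K_1, π_2 : P_2 → K_2 arbitrary assignments with costs C_j = ∑_{x∈P_j} d(x, π_j(x)). Let t be an integer with t_1 ≤ t ≤ t_2 and set θ = (t − t_1)/(t_2 − t_1). Then there exists P ⊆ A with |P| = n − t such that ∑_{x∈P} d(x, K_1 ∪ K_2) ≤ (1−θ)·C_1 + θ·C_2, where d(x,K) = min_{y∈K} d(x,y). -/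
open Metric Finset

/-- Taking the cheapest `s` elements of `S`: there is a subset of size `s` whose
`w`-cost is at most the fraction `s / |S|` of the total cost. -/
lemma cheap_subset {X : Type*} [DecidableEq X] (w : X → ℝ) :
    ∀ (m : ℕ) (S : Finset X), S.card = m → (∀ x ∈ S, 0 ≤ w x) → ∀ s ≤ m,
    ∃ T, T ⊆ S ∧ T.card = s ∧ (m : ℝ) * ∑ x ∈ T, w x ≤ (s : ℝ) * ∑ x ∈ S, w x := by
  intro m
  induction m with
  | zero =>
    intro S hS hw s hs
    interval_cases s
    exact ⟨∅, empty_subset S, card_empty, by simp⟩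
  | succ k ih =>
    intro S hS hw s hs
    rcases eq_or_lt_of_le hs with h | h
    · exact ⟨S, Subset.rfl, hS.trans h.symm ▸ hS ▸ rfl, by rw [h]⟩
    · have hs' : s ≤ k := Nat.lt_succ_iff.mp h
      have hne : S.Nonempty := card_pos.mp (by omega)
      obtain ⟨x, hxS, hx⟩ := exists_max_image S w hne
      set S' := S.erase x with hS'
      have hcard' : S'.card = k := by rw [hS', card_erase_of_mem hxS, hS]; omega
      have hw' : ∀ y ∈ S', 0 ≤ w y := fun y hy => hw y (mem_of_mem_erase hy)
      obtain ⟨T, hTsub, hTcard, hT⟩ := ih S' hcard' hw' s hs'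
      refine ⟨T, hTsub.trans (erase_subset x S), hTcard, ?_⟩
      have hsum' : ∑ y ∈ S', w y = ∑ y ∈ S, w y - w x := by
        rw [hS', sum_erase_eq_sub hxS]
      have havg : ∑ y ∈ S, w y ≤ (k + 1 : ℝ) * w x := by
        have := Finset.sum_le_card_nsmul S w (w x) (fun y hy => hx y hy)
        rw [hS] at this
        push_cast at this ⊢
        simpa [nsmul_eq_mul] using this
      -- (k+1) * ∑_{S'} ≤ k * ∑_S
      have key : (k + 1 : ℝ) * ∑ y ∈ S', w y ≤ (k : ℝ) * ∑ y ∈ S, w y := by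
        rw [hsum']; nlinarith
      rcases Nat.eq_zero_or_pos s with rfl | hspos
      · have : T = ∅ := card_eq_zero.mp hTcard
        subst this
        have : (0:ℝ) ≤ ∑ y ∈ S, w y := sum_nonneg hw
        simp
      rcases Nat.eq_zero_or_pos k with rfl | hkpos
      · omega
      · have hk : (0:ℝ) < k := by positivity
        have h1 : (k:ℝ) * ((k+1) * ∑ x ∈ T, w x) ≤ (k:ℝ) * ((s:ℝ) * ∑ y ∈ S, w y) := by
          have hs0 : (0:ℝ) ≤ s := by positivity
          calc (k:ℝ) * ((k+1) * ∑ x ∈ T, w x) = (k+1 : ℝ) * ((k:ℝ) * ∑ x ∈ T, w x) := by ring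
            _ ≤ (k+1 : ℝ) * ((s:ℝ) * ∑ y ∈ S', w y) := by
                apply mul_le_mul_of_nonneg_left hT (by positivity)
            _ = (s:ℝ) * ((k+1:ℝ) * ∑ y ∈ S', w y) := by ring
            _ ≤ (s:ℝ) * ((k:ℝ) * ∑ y ∈ S, w y) := mul_le_mul_of_nonneg_left key hs0
            _ = (k:ℝ) * ((s:ℝ) * ∑ y ∈ S, w y) := by ring
        have := (mul_le_mul_iff_right₀ hk).mp h1
        push_cast
        linarith

set_option maxHeartbeats 1000000 in
lemma choose_split (m1 m2 N : ℕ) (hm1 : 1 ≤ m1) (θ : ℝ) (hθ0 : 0 ≤ θ) (hθ1 : θ ≤ 1)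
    (hN : (1 - θ) * m1 + θ * m2 = N) (A1 A2 : ℝ) (hA1 : 0 ≤ A1) (hA2 : 0 ≤ A2) :
    ∃ s1 s2 : ℕ, s1 + s2 = N ∧ s1 ≤ m1 ∧ s2 ≤ m2 ∧
      ((s1 : ℝ) / m1) * A1 + ((s2 : ℝ) / m2) * A2 ≤ (1 - θ) * A1 + θ * A2 := by
  have hm1R : (0:ℝ) < m1 := by exact_mod_cast hm1
  have hm2R : (0:ℝ) ≤ m2 := Nat.cast_nonneg m2
  obtain ⟨u, hu⟩ : ∃ u : ℝ, u = (1 - θ) * m1 := ⟨_, rfl⟩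
  rw [← hu] at hN
  have hu0 : 0 ≤ u := by nlinarith
  have hum1 : u ≤ m1 := by nlinarith
  have huN : u ≤ N := by nlinarith
  obtain ⟨f, hf⟩ : ∃ f : ℕ, f = ⌊u⌋₊ := ⟨_, rfl⟩
  have hfu : (f:ℝ) ≤ u := hf ▸ Nat.floor_le hu0
  have hfm1 : f ≤ m1 := by
    have : (f:ℝ) ≤ m1 := le_trans hfu hum1
    exact_mod_cast this
  have hfN : f ≤ N := by
    have : (f:ℝ) ≤ N := le_trans hfu huN
    exact_mod_cast this
  rcases eq_or_lt_of_le hfu with heq | hlt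
  · -- u is an integer: exact split
    have hs2 : ((N - f : ℕ) : ℝ) = θ * m2 := by
      rw [Nat.cast_sub hfN, heq]; linarith
    have hs2m2 : (N - f : ℕ) ≤ m2 := by
      have h2 : ((N - f : ℕ) : ℝ) ≤ m2 := by rw [hs2]; nlinarith
      exact_mod_cast h2
    refine ⟨f, N - f, by omega, hfm1, hs2m2, ?_⟩
    have h1 : (f:ℝ) / m1 = 1 - θ := by
      rw [heq, hu, mul_div_assoc, div_self (ne_of_gt hm1R), mul_one]
    rw [h1, hs2]
    rcases eq_or_lt_of_le hm2R with hm2 | hm2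
    · rw [← hm2]
      simp
      nlinarith [mul_nonneg hθ0 hA2]
    · rw [mul_div_assoc, div_self (ne_of_gt hm2), mul_one]
  · -- u not an integer
    have hm2pos : (0:ℝ) < m2 := by
      rcases eq_or_lt_of_le hm2R with hm2 | hm2
      · exfalso
        have huN' : u = N := by nlinarith
        have : (f:ℝ) = u := by rw [hf, huN', Nat.floor_natCast]
        linarith
      · exact hm2
    obtain ⟨lam, hlam⟩ : ∃ lam : ℝ, lam = u - f := ⟨_, rfl⟩
    have hlam0 : 0 < lam := by rw [hlam]; linarith
    have hlt1 : u < f + 1 := by rw [hf]; exact Nat.lt_floor_add_one u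
    have hlam1 : lam < 1 := by rw [hlam]; linarith
    have hfm1' : f + 1 ≤ m1 := by
      have h' : (f:ℝ) < m1 := lt_of_lt_of_le hlt hum1
      have : f < m1 := by exact_mod_cast h'
      omega
    have huNs : u < N := by
      by_contra h'
      push_neg at h'
      have he : u = N := le_antisymm huN h'
      have : (f:ℝ) = u := by rw [hf, he, Nat.floor_natCast]
      linarith
    have hfN' : f + 1 ≤ N := by
      have h' : (f:ℝ) < N := lt_trans hlt huNs
      have : f < N := by exact_mod_cast h'
      omega
    have hNfm2 : N ≤ f + 1 + m2 := by
      have h1 : (N:ℝ) = u + θ * m2 := by linarith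
      have h2 : (N:ℝ) < f + 1 + m2 := by nlinarith
      have h3 : N < f + 1 + m2 := by exact_mod_cast h2
      omega
    have hA1' : 1 - θ = u * (m1:ℝ)⁻¹ := by
      rw [hu, mul_assoc, mul_inv_cancel₀ (ne_of_gt hm1R), mul_one]
    have hA2' : θ = ((N:ℝ) - u) * (m2:ℝ)⁻¹ := by
      have h1 : (N:ℝ) - u = θ * m2 := by linarith
      rw [h1, mul_assoc, mul_inv_cancel₀ (ne_of_gt hm2pos), mul_one]
    have hkey : (1 - lam) * (((f:ℝ) * (m1:ℝ)⁻¹) * A1 + (((N:ℝ) - f) * (m2:ℝ)⁻¹) * A2)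
        + lam * ((((f:ℝ) + 1) * (m1:ℝ)⁻¹) * A1 + (((N:ℝ) - f - 1) * (m2:ℝ)⁻¹) * A2)
        = (1 - θ) * A1 + θ * A2 := by
      rw [hA1', hA2', hlam]; ring
    have hNfm2' : N ≤ f + m2 := by
      by_cases hc : N ≤ m2
      · omega
      · push_neg at hc
        have hk : ((N - m2 : ℕ) : ℝ) ≤ u := by
          rw [Nat.cast_sub (le_of_lt hc)]
          nlinarith
        have : N - m2 ≤ f := by rw [hf]; exact Nat.le_floor hk
        omega
    rcases le_total (((f:ℝ) * (m1:ℝ)⁻¹) * A1 + (((N:ℝ) - f) * (m2:ℝ)⁻¹) * A2)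
        ((((f:ℝ) + 1) * (m1:ℝ)⁻¹) * A1 + (((N:ℝ) - f - 1) * (m2:ℝ)⁻¹) * A2) with hAB | hAB
    · refine ⟨f, N - f, by omega, hfm1, by omega, ?_⟩
      rw [Nat.cast_sub hfN]
      simp only [div_eq_mul_inv]
      nlinarith [hkey, hAB, hlam0.le, hlam1.le, mul_nonneg hlam0.le (sub_nonneg.mpr hAB)]
    · refine ⟨f + 1, N - (f + 1), by omega, hfm1', by omega, ?_⟩
      rw [Nat.cast_sub hfN']
      push_cast
      simp only [div_eq_mul_inv]
      nlinarith [hkey, hAB, hlam0.le, hlam1.le,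
        mul_nonneg (by linarith : (0:ℝ) ≤ 1 - lam) (sub_nonneg.mpr hAB)]

set_option maxHeartbeats 1000000 in
/-- Combining two clustering solutions excluding `t₁` and `t₂` points into a single
solution with centers `K₁ ∪ K₂` excluding exactly `t` points, whose cost is at most
the convex combination of the two costs. -/
theorem combine_two_solutions {X : Type*} [MetricSpace X] [DecidableEq X]
    (A : Finset X) (n : ℕ) (hn : A.card = n)
    (K1 K2 : Finset X) (hK1 : K1.Nonempty) (hK2 : K2.Nonempty)
    (t1 t2 : ℕ) (h12 : t1 < t2) (h2n : t2 ≤ n)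
    (P1 P2 : Finset X) (hP1 : P1 ⊆ A) (hP2 : P2 ⊆ A)
    (hP1card : P1.card = n - t1) (hP2card : P2.card = n - t2)
    (π1 π2 : X → X) (hπ1 : ∀ x ∈ P1, π1 x ∈ K1) (hπ2 : ∀ x ∈ P2, π2 x ∈ K2)
    (C1 C2 : ℝ) (hC1 : C1 = ∑ x ∈ P1, dist x (π1 x)) (hC2 : C2 = ∑ x ∈ P2, dist x (π2 x))
    (t : ℕ) (ht1 : t1 ≤ t) (ht2 : t ≤ t2)
    (θ : ℝ) (hθ : θ = ((t : ℝ) - (t1 : ℝ)) / ((t2 : ℝ) - (t1 : ℝ))) :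
    ∃ P ⊆ A, P.card = n - t ∧
      ∑ x ∈ P, infDist x ((K1 ∪ K2 : Finset X) : Set X) ≤ (1 - θ) * C1 + θ * C2 := by
  -- notation
  set d : X → ℝ := fun x => infDist x ((K1 ∪ K2 : Finset X) : Set X) with hd
  set w1 : X → ℝ := fun x => dist x (π1 x) with hw1
  set w2 : X → ℝ := fun x => dist x (π2 x) with hw2
  -- basic bounds on d
  have hd1 : ∀ x ∈ P1, d x ≤ w1 x := by
    intro x hx
    exact infDist_le_dist_of_mem (by
      simp only [Finset.coe_union, Set.mem_union, Finset.mem_coe]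
      exact Or.inl (hπ1 x hx))
  have hd2 : ∀ x ∈ P2, d x ≤ w2 x := by
    intro x hx
    exact infDist_le_dist_of_mem (by
      simp only [Finset.coe_union, Set.mem_union, Finset.mem_coe]
      exact Or.inr (hπ2 x hx))
  have hdnn : ∀ x, 0 ≤ d x := fun x => infDist_nonneg
  -- θ facts
  have hsub : (0:ℝ) < (t2:ℝ) - t1 := by
    have : (t1:ℝ) < t2 := by exact_mod_cast h12
    linarith
  have hθ0 : 0 ≤ θ := by
    rw [hθ]
    apply div_nonneg _ hsub.le
    have : (t1:ℝ) ≤ t := by exact_mod_cast ht1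
    linarith
  have hθ1 : θ ≤ 1 := by
    rw [hθ]
    rw [div_le_one hsub]
    have : (t:ℝ) ≤ t2 := by exact_mod_cast ht2
    linarith
  have hθt : θ * ((t2:ℝ) - t1) = (t:ℝ) - t1 := by
    rw [hθ, div_mul_cancel₀ _ (ne_of_gt hsub)]
  -- the partition
  set I : Finset X := P1 ∩ P2 with hI
  set Q1 : Finset X := P1 \ P2 with hQ1
  set Q2 : Finset X := P2 \ P1 with hQ2
  obtain ⟨a, ha⟩ : ∃ a, a = I.card := ⟨_, rfl⟩
  obtain ⟨m1, hm1⟩ : ∃ m1, m1 = Q1.card := ⟨_, rfl⟩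
  obtain ⟨m2, hm2⟩ : ∃ m2, m2 = Q2.card := ⟨_, rfl⟩
  have hsplit1 : m1 + a = n - t1 := by
    rw [hm1, ha, hQ1, hI, ← hP1card]
    exact card_sdiff_add_card_inter P1 P2
  have hsplit2 : m2 + a = n - t2 := by
    rw [hm2, ha, hQ2, hI, Finset.inter_comm, ← hP2card]
    exact card_sdiff_add_card_inter P2 P1
  have ht1n : t1 ≤ n := le_trans (le_of_lt h12) h2n
  have htn : t ≤ n := le_trans ht2 h2n
  obtain ⟨N, hN⟩ : ∃ N, N = n - t - a := ⟨_, rfl⟩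
  have hNa : N + a = n - t := by omega
  have hm1pos : 1 ≤ m1 := by omega
  -- real cast identities
  have hm1R : (m1:ℝ) + a + t1 = n := by
    have : m1 + a + t1 = n := by omega
    exact_mod_cast this
  have hm2R : (m2:ℝ) + a + t2 = n := by
    have : m2 + a + t2 = n := by omega
    exact_mod_cast this
  have hNR : (N:ℝ) + a + t = n := by
    have : N + a + t = n := by omega
    exact_mod_cast this
  have hNreal : (1 - θ) * m1 + θ * m2 = N := by nlinarith
  -- sums over the parts
  have hnnQ1 : ∀ x ∈ Q1, 0 ≤ w1 x := fun x _ => dist_nonneg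
  have hnnQ2 : ∀ x ∈ Q2, 0 ≤ w2 x := fun x _ => dist_nonneg
  have hA1nn : (0:ℝ) ≤ ∑ x ∈ Q1, w1 x := Finset.sum_nonneg hnnQ1
  have hA2nn : (0:ℝ) ≤ ∑ x ∈ Q2, w2 x := Finset.sum_nonneg hnnQ2
  obtain ⟨s1, s2, hs12, hs1, hs2, hsplitle⟩ :=
    choose_split m1 m2 N hm1pos θ hθ0 hθ1 hNreal (∑ x ∈ Q1, w1 x) (∑ x ∈ Q2, w2 x) hA1nn hA2nn
  obtain ⟨T1, hT1sub, hT1card, hT1⟩ := cheap_subset w1 m1 Q1 hm1.symm hnnQ1 s1 hs1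
  obtain ⟨T2, hT2sub, hT2card, hT2⟩ := cheap_subset w2 m2 Q2 hm2.symm hnnQ2 s2 hs2
  -- bounds on the cheap parts
  have hT1le : ∑ x ∈ T1, w1 x ≤ ((s1:ℝ) / m1) * ∑ x ∈ Q1, w1 x := by
    rw [div_mul_eq_mul_div, le_div_iff₀ (by exact_mod_cast hm1pos)]
    linarith
  have hT2le : ∑ x ∈ T2, w2 x ≤ ((s2:ℝ) / m2) * ∑ x ∈ Q2, w2 x := by
    rcases Nat.eq_zero_or_pos m2 with h0 | hpos
    · have : T2 = ∅ := by
        have : Q2 = ∅ := card_eq_zero.mp (by omega)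
        exact subset_empty.mp (this ▸ hT2sub)
      rw [this]
      simp only [Finset.sum_empty]
      positivity
    · rw [div_mul_eq_mul_div, le_div_iff₀ (by exact_mod_cast hpos)]
      linarith
  -- the chosen set
  refine ⟨I ∪ T1 ∪ T2, ?_, ?_, ?_⟩
  · intro x hx
    simp only [Finset.mem_union] at hx
    rcases hx with (hx | hx) | hx
    · exact hP1 (Finset.mem_of_mem_inter_left hx)
    · exact hP1 (Finset.mem_sdiff.mp (hT1sub hx)).1
    · exact hP2 (Finset.mem_sdiff.mp (hT2sub hx)).1
  · have hdisj1 : Disjoint I T1 := by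
      apply Finset.disjoint_left.mpr
      intro x hxI hxT
      exact (Finset.mem_sdiff.mp (hT1sub hxT)).2 (Finset.mem_of_mem_inter_right hxI)
    have hdisj2 : Disjoint (I ∪ T1) T2 := by
      apply Finset.disjoint_left.mpr
      intro x hxI hxT
      have hx2 : x ∉ P1 := (Finset.mem_sdiff.mp (hT2sub hxT)).2
      simp only [Finset.mem_union] at hxI
      rcases hxI with hx | hx
      · exact hx2 (Finset.mem_of_mem_inter_left hx)
      · exact hx2 (Finset.mem_sdiff.mp (hT1sub hx)).1
    rw [Finset.card_union_of_disjoint hdisj2, Finset.card_union_of_disjoint hdisj1,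
      hT1card, hT2card, ← ha]
    omega
  · -- cost bound
    have hdisj1 : Disjoint I T1 := by
      apply Finset.disjoint_left.mpr
      intro x hxI hxT
      exact (Finset.mem_sdiff.mp (hT1sub hxT)).2 (Finset.mem_of_mem_inter_right hxI)
    have hdisj2 : Disjoint (I ∪ T1) T2 := by
      apply Finset.disjoint_left.mpr
      intro x hxI hxT
      have hx2 : x ∉ P1 := (Finset.mem_sdiff.mp (hT2sub hxT)).2
      simp only [Finset.mem_union] at hxI
      rcases hxI with hx | hx
      · exact hx2 (Finset.mem_of_mem_inter_left hx)
      · exact hx2 (Finset.mem_sdiff.mp (hT1sub hx)).1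
    rw [Finset.sum_union hdisj2, Finset.sum_union hdisj1]
    -- bound each piece
    have hIle : ∑ x ∈ I, d x ≤ (1 - θ) * ∑ x ∈ I, w1 x + θ * ∑ x ∈ I, w2 x := by
      rw [Finset.mul_sum, Finset.mul_sum, ← Finset.sum_add_distrib]
      apply Finset.sum_le_sum
      intro x hx
      have h1 : d x ≤ w1 x := hd1 x (Finset.mem_of_mem_inter_left hx)
      have h2 : d x ≤ w2 x := hd2 x (Finset.mem_of_mem_inter_right hx)
      nlinarith [hdnn x]
    have hT1le' : ∑ x ∈ T1, d x ≤ ∑ x ∈ T1, w1 x := by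
      apply Finset.sum_le_sum
      intro x hx
      exact hd1 x (Finset.mem_sdiff.mp (hT1sub hx)).1
    have hT2le' : ∑ x ∈ T2, d x ≤ ∑ x ∈ T2, w2 x := by
      apply Finset.sum_le_sum
      intro x hx
      exact hd2 x (Finset.mem_sdiff.mp (hT2sub hx)).1
    -- decompose C1, C2
    have hC1split : C1 = ∑ x ∈ I, w1 x + ∑ x ∈ Q1, w1 x := by
      rw [hC1, ← Finset.sum_inter_add_sum_sdiff P1 P2 w1]
    have hC2split : C2 = ∑ x ∈ I, w2 x + ∑ x ∈ Q2, w2 x := by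
      rw [hC2, ← Finset.sum_inter_add_sum_sdiff P2 P1 w2, hI, Finset.inter_comm]
    rw [hC1split, hC2split]
    have := hsplitle
    linarith
end

section
/- Let X be a metric space, A a finite subset of X partitioned as A = A_1 ⊎ ⋯ ⊎ A_s with each A_i nonempty, and let k ≥ 1, t ≥ 0 be integers with t ≤ |A|. Let K* ⊆ A (nonempty, |K*| ≤ k) and O* ⊆ A (|O*| ≤ t) attain the (k,t)-center cost Ccen(A,k,t), and set t_i* = |O* ∩ A_i| for each i. Then max_{1 ≤ i ≤ s} Ccen(A_i, k, t_i*) ≤ 2·Ccen(A, k, t). -/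
open Metric Finset

/-- The (k,t)-center cost of a finite point set `S`: the minimum over nonempty
`K ⊆ S` with `|K| ≤ k` and `O ⊆ S` with `|O| ≤ t` of `max_{p ∈ S \ O} d(p, K)`,
the maximum over the empty set being `0`. -/
noncomputable def cenCost {X : Type*} [MetricSpace X] [DecidableEq X]
    (S : Finset X) (k t : ℕ) : ℝ :=
  sInf { c : ℝ | ∃ K O : Finset X, K ⊆ S ∧ K.Nonempty ∧ K.card ≤ k ∧
    O ⊆ S ∧ O.card ≤ t ∧
    c = sSup (insert 0 ((fun p => infDist p (K : Set X)) '' ((S \ O : Finset X) : Set X))) }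

theorem max_local_cenCost_le {X : Type*} [MetricSpace X] [DecidableEq X]
    {s : ℕ} (hs : 0 < s) (𝒜 : Fin s → Finset X)
    (hdisj : ∀ i j, i ≠ j → Disjoint (𝒜 i) (𝒜 j))
    (hne : ∀ i, (𝒜 i).Nonempty)
    (A : Finset X) (hA : A = Finset.univ.biUnion 𝒜)
    (k t : ℕ) (hk : 1 ≤ k) (ht : t ≤ A.card)
    (Kstar Ostar : Finset X)
    (hK1 : Kstar ⊆ A) (hK2 : Kstar.Nonempty) (hK3 : Kstar.card ≤ k)
    (hO1 : Ostar ⊆ A) (hO2 : Ostar.card ≤ t)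
    (hopt : sSup (insert 0 ((fun p => infDist p (Kstar : Set X)) ''
        ((A \ Ostar : Finset X) : Set X))) = cenCost A k t) :
    (Finset.univ : Finset (Fin s)).sup' ⟨⟨0, hs⟩, Finset.mem_univ _⟩
        (fun i => cenCost (𝒜 i) k ((Ostar ∩ 𝒜 i).card)) ≤ 2 * cenCost A k t := by
  classical
  set r := cenCost A k t with hr
  have hfinA : (insert (0:ℝ) ((fun p => infDist p (Kstar : Set X)) ''
      ((A \ Ostar : Finset X) : Set X))).Finite :=
    ((A \ Ostar).finite_toSet.image _).insert 0
  have hbddA := hfinA.bddAbove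
  have hr0 : 0 ≤ r := hopt ▸ le_csSup hbddA (Set.mem_insert _ _)
  have hdistr : ∀ p ∈ A, p ∉ Ostar → infDist p (Kstar : Set X) ≤ r := by
    intro p hp hpo
    refine hopt ▸ le_csSup hbddA ?_
    exact Set.mem_insert_of_mem _ ⟨p, by simp [Finset.mem_sdiff, hp, hpo], rfl⟩
  apply Finset.sup'_le
  intro i _
  set B := 𝒜 i \ Ostar with hB
  obtain ⟨p₀, hp₀⟩ := hne i
  set f : X → X := fun κ => if h : ∃ q ∈ B, dist q κ ≤ r then h.choose else p₀ with hf
  set Ki := Kstar.image f with hKi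
  have hKiA : Ki ⊆ 𝒜 i := by
    intro x hx
    simp only [hKi, Finset.mem_image] at hx
    obtain ⟨κ, _, rfl⟩ := hx
    by_cases h : ∃ q ∈ B, dist q κ ≤ r
    · simp only [hf, dif_pos h]
      exact (Finset.mem_sdiff.mp h.choose_spec.1).1
    · simp only [hf, dif_neg h]; exact hp₀
  have key : ∀ p ∈ B, infDist p (Ki : Set X) ≤ 2 * r := by
    intro p hp
    have hpA : p ∈ A := by
      rw [hA]
      exact Finset.mem_biUnion.mpr ⟨i, Finset.mem_univ _, (Finset.mem_sdiff.mp hp).1⟩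
    have hpO : p ∉ Ostar := (Finset.mem_sdiff.mp hp).2
    obtain ⟨κ, hκK, hκd⟩ := Kstar.finite_toSet.isCompact.exists_infDist_eq_dist
      (Finset.coe_nonempty.mpr hK2) p
    have hdκ : dist p κ ≤ r := hκd ▸ hdistr p hpA hpO
    have hex : ∃ q ∈ B, dist q κ ≤ r := ⟨p, hp, hdκ⟩
    have hfκ : f κ = hex.choose := by simp only [hf, dif_pos hex]
    have hq := hex.choose_spec
    have hmem : f κ ∈ (Ki : Set X) := by
      exact_mod_cast Finset.mem_image_of_mem f hκK
    calc infDist p (Ki : Set X) ≤ dist p (f κ) := infDist_le_dist_of_mem hmem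
      _ ≤ dist p κ + dist κ (f κ) := dist_triangle _ _ _
      _ = dist p κ + dist hex.choose κ := by rw [hfκ, dist_comm κ hex.choose]
      _ ≤ r + r := add_le_add hdκ hq.2
      _ = 2 * r := by ring
  set c := sSup (insert (0:ℝ) ((fun p => infDist p (Ki : Set X)) '' (B : Set X))) with hc
  have hBeq : 𝒜 i \ (Ostar ∩ 𝒜 i) = B := by
    ext x; simp only [hB, Finset.mem_sdiff, Finset.mem_inter]; tauto
  have hmemc : c ∈ { c : ℝ | ∃ K O : Finset X, K ⊆ 𝒜 i ∧ K.Nonempty ∧ K.card ≤ k ∧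
      O ⊆ 𝒜 i ∧ O.card ≤ (Ostar ∩ 𝒜 i).card ∧
      c = sSup (insert 0 ((fun p => infDist p (K : Set X)) ''
        ((𝒜 i \ O : Finset X) : Set X))) } := by
    exact ⟨Ki, Ostar ∩ 𝒜 i, hKiA, hK2.image f,
      (Finset.card_image_le).trans hK3, Finset.inter_subset_right, le_refl _,
      by rw [hBeq]⟩
  have hbdd : BddBelow { c : ℝ | ∃ K O : Finset X, K ⊆ 𝒜 i ∧ K.Nonempty ∧ K.card ≤ k ∧
      O ⊆ 𝒜 i ∧ O.card ≤ (Ostar ∩ 𝒜 i).card ∧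
      c = sSup (insert 0 ((fun p => infDist p (K : Set X)) ''
        ((𝒜 i \ O : Finset X) : Set X))) } := by
    refine ⟨0, ?_⟩
    rintro x ⟨K, O, _, _, _, _, _, rfl⟩
    exact le_csSup (((𝒜 i \ O).finite_toSet.image _).insert 0).bddAbove (Set.mem_insert _ _)
  have h1 : cenCost (𝒜 i) k ((Ostar ∩ 𝒜 i).card) ≤ c := csInf_le hbdd hmemc
  have h2 : c ≤ 2 * r := by
    apply Real.sSup_le
    · rintro x (rfl | ⟨p, hp, rfl⟩)
      · linarith
      · exact key p (by exact_mod_cast hp)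
    · linarith
  linarith
end

section
/- In the uncertain setup, let k ≥ 1 and t ≥ 0 be integers, M ⊆ { y_j : j ∈ A } a nonempty set with |M| ≤ k, O ⊆ A with |O| ≤ t, and π : A∖O → M an assignment; let C_G = ∑_{j∈A∖O} ( ℓ_j + d(y_j, π(j)) ). Then ∑_{j∈A∖O} E_j[d(·, π(j))] ≤ 2·C_G. -/
open Metric Finset

/-- Lemma 5.5 (median objective): a solution on the compressed graph yields a solution
of the uncertain (k,t)-median problem of cost at most 2 times larger. -/
theorem compressed_to_uncertain_median {P : Type*} [MetricSpace P]
    {ι : Type*} [DecidableEq ι] [DecidableEq P]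
    (SP : Finset P) (hSP : SP.Nonempty)
    (A : Finset ι) (w : ι → P → ℝ)
    (hw0 : ∀ j ∈ A, ∀ p ∈ SP, 0 ≤ w j p)
    (hw1 : ∀ j ∈ A, ∑ p ∈ SP, w j p = 1)
    (y : ι → P)
    (hy : ∀ j ∈ A, ∀ z : P,
      ∑ p ∈ SP, w j p * dist p (y j) ≤ ∑ p ∈ SP, w j p * dist p z)
    (ℓ : ι → ℝ) (hℓ : ∀ j, ℓ j = ∑ p ∈ SP, w j p * dist p (y j))
    (k t : ℕ) (hk : 1 ≤ k)
    (M : Finset P) (hM : M ⊆ A.image y) (hMne : M.Nonempty) (hMcard : M.card ≤ k)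
    (O : Finset ι) (hOA : O ⊆ A) (hOcard : O.card ≤ t)
    (π : ι → P) (hπ : ∀ j ∈ A \ O, π j ∈ M)
    (CG : ℝ) (hCG : CG = ∑ j ∈ A \ O, (ℓ j + dist (y j) (π j))) :
    ∑ j ∈ A \ O, ∑ p ∈ SP, w j p * dist p (π j) ≤ 2 * CG := by
  have hterm : ∀ j ∈ A \ O,
      ∑ p ∈ SP, w j p * dist p (π j) ≤ ℓ j + dist (y j) (π j) := by
    intro j hj
    have hjA : j ∈ A := (mem_sdiff.mp hj).1
    calc ∑ p ∈ SP, w j p * dist p (π j)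
        ≤ ∑ p ∈ SP, w j p * (dist p (y j) + dist (y j) (π j)) := by
          apply Finset.sum_le_sum
          intro p hp
          exact mul_le_mul_of_nonneg_left (dist_triangle p (y j) (π j)) (hw0 j hjA p hp)
      _ = ℓ j + dist (y j) (π j) := by
          simp only [mul_add, Finset.sum_add_distrib, ← Finset.sum_mul, hw1 j hjA,
            one_mul, hℓ j]
  have hCG0 : 0 ≤ CG := by
    rw [hCG]
    apply Finset.sum_nonneg
    intro j hj
    have hjA : j ∈ A := (mem_sdiff.mp hj).1
    have hℓ0 : 0 ≤ ℓ j := by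
      rw [hℓ j]
      exact Finset.sum_nonneg fun p hp =>
        mul_nonneg (hw0 j hjA p hp) dist_nonneg
    positivity
  calc ∑ j ∈ A \ O, ∑ p ∈ SP, w j p * dist p (π j)
      ≤ ∑ j ∈ A \ O, (ℓ j + dist (y j) (π j)) := Finset.sum_le_sum hterm
    _ = CG := hCG.symm
    _ ≤ 2 * CG := by linarith
end

section
/- In the uncertain setup with truncated distances, let k ≥ 1, t ≥ 0 and τ ≥ 0, and let A be partitioned as A = A_1 ⊎ ⋯ ⊎ A_s with supp(A_i) nonempty for each i. Let K* ⊆ supp(A) (nonempty, |K*| ≤ k) and O* ⊆ A (|O*| ≤ t) attain the truncated (k,t)-median cost C(A,k,t,ρ_τ), and set t_i* = |O* ∩ A_i| for each i. Then ∑_{i=1}^s C(A_i, k, t_i*, ρ_{2τ}) ≤ 2·C(A, k, t, ρ_τ). -/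
open Metric Finset

/-- The support of a set `Z` of uncertain nodes: all points of `SP` given positive
weight by some node of `Z`. -/
noncomputable def nodeSupp {P : Type*} {ι : Type*} [DecidableEq P] [DecidableEq ι]
    (SP : Finset P) (w : ι → P → ℝ) (Z : Finset ι) : Finset P :=
  open Classical in
  Z.biUnion fun j => SP.filter fun p => 0 < w j p

/-- The truncated (k,t)-median cost `C(Z,k,t,ρ_τ)`: the minimum over nonempty
`K ⊆ supp Z` with `|K| ≤ k` and `O ⊆ Z` with `|O| ≤ t` of
`∑_{j ∈ Z \ O} min_{m ∈ K} ρ_τ(j,m)`, where `ρ_τ(j,u) = E_j[L_τ(·,u)]`. -/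
noncomputable def trMedCost {P : Type*} {ι : Type*} [MetricSpace P]
    [DecidableEq P] [DecidableEq ι]
    (SP : Finset P) (w : ι → P → ℝ) (Z : Finset ι) (k t : ℕ) (τ : ℝ) : ℝ :=
  sInf { c : ℝ | ∃ (K : Finset P) (O : Finset ι),
    K ⊆ nodeSupp SP w Z ∧ K.Nonempty ∧ K.card ≤ k ∧ O ⊆ Z ∧ O.card ≤ t ∧
    c = ∑ j ∈ Z \ O,
      sInf ((fun m => ∑ p ∈ SP, w j p * max (dist p m - τ) 0) '' (K : Set P)) }

lemma mem_nodeSupp_of {P : Type*} {ι : Type*} [DecidableEq P] [DecidableEq ι]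
    {SP : Finset P} {w : ι → P → ℝ} {Z : Finset ι} {j : ι} {p : P}
    (hj : j ∈ Z) (hp : p ∈ SP) (h : 0 < w j p) : p ∈ nodeSupp SP w Z := by
  classical
  unfold nodeSupp
  simp only [Finset.mem_biUnion, Finset.mem_filter]
  exact ⟨j, hj, hp, h⟩

lemma aux_key {P : Type*} {ι : Type*} [MetricSpace P] [DecidableEq P] [DecidableEq ι]
    (SP : Finset P) (w : ι → P → ℝ) (Z : Finset ι) (j : ι) (hj : j ∈ Z)
    (hw0 : ∀ p ∈ SP, 0 ≤ w j p) (hw1 : ∑ p ∈ SP, w j p = 1)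
    (τ : ℝ) (m u : P) (hu : ∀ p ∈ nodeSupp SP w Z, dist m u ≤ dist m p) :
    ∑ p ∈ SP, w j p * max (dist p u - 2 * τ) 0 ≤
      2 * ∑ p ∈ SP, w j p * max (dist p m - τ) 0 := by
  set L := max (dist m u - τ) 0 with hLdef
  have hL0 : (0:ℝ) ≤ L := le_max_right _ _
  have h1 : ∀ p ∈ SP, w j p * max (dist p u - 2 * τ) 0 ≤
      w j p * (max (dist p m - τ) 0 + L) := by
    intro p hp
    apply mul_le_mul_of_nonneg_left _ (hw0 p hp)
    apply max_le
    · have ht := dist_triangle p m u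
      have h1 := le_max_left (dist p m - τ) 0
      have h2 := le_max_left (dist m u - τ) 0
      rw [hLdef]; linarith
    · have := le_max_right (dist p m - τ) 0
      linarith
  have h2 : ∀ p ∈ SP, w j p * L ≤ w j p * max (dist p m - τ) 0 := by
    intro p hp
    rcases eq_or_lt_of_le (hw0 p hp) with h | h
    · simp [← h]
    · apply mul_le_mul_of_nonneg_left _ (le_of_lt h)
      have hpm := hu p (mem_nodeSupp_of hj hp h)
      rw [hLdef]
      apply max_le
      · have h3 := le_max_left (dist p m - τ) 0
        rw [dist_comm m p] at hpm
        linarith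
      · exact le_max_right _ _
  have hsum1 : ∑ p ∈ SP, w j p * max (dist p u - 2 * τ) 0 ≤
      (∑ p ∈ SP, w j p * max (dist p m - τ) 0) + L := by
    calc ∑ p ∈ SP, w j p * max (dist p u - 2 * τ) 0
        ≤ ∑ p ∈ SP, w j p * (max (dist p m - τ) 0 + L) := Finset.sum_le_sum h1
      _ = (∑ p ∈ SP, w j p * max (dist p m - τ) 0) + (∑ p ∈ SP, w j p) * L := by
          simp [mul_add, Finset.sum_add_distrib, Finset.sum_mul]
      _ = _ := by rw [hw1, one_mul]
  have hsum2 : L ≤ ∑ p ∈ SP, w j p * max (dist p m - τ) 0 := by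
    calc L = (∑ p ∈ SP, w j p) * L := by rw [hw1, one_mul]
      _ = ∑ p ∈ SP, w j p * L := by rw [Finset.sum_mul]
      _ ≤ _ := Finset.sum_le_sum h2
  linarith

theorem sum_local_trMedCost_le {P : Type*} {ι : Type*} [MetricSpace P]
    [DecidableEq P] [DecidableEq ι]
    (SP : Finset P) (hSP : SP.Nonempty)
    {s : ℕ} (𝒜 : Fin s → Finset ι)
    (hdisj : ∀ i j, i ≠ j → Disjoint (𝒜 i) (𝒜 j))
    (A : Finset ι) (hA : A = Finset.univ.biUnion 𝒜)
    (w : ι → P → ℝ)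
    (hw0 : ∀ j ∈ A, ∀ p ∈ SP, 0 ≤ w j p)
    (hw1 : ∀ j ∈ A, ∑ p ∈ SP, w j p = 1)
    (hsupp : ∀ i, (nodeSupp SP w (𝒜 i)).Nonempty)
    (k t : ℕ) (hk : 1 ≤ k) (τ : ℝ) (hτ : 0 ≤ τ)
    (Kstar : Finset P) (Ostar : Finset ι)
    (hK1 : Kstar ⊆ nodeSupp SP w A) (hK2 : Kstar.Nonempty) (hK3 : Kstar.card ≤ k)
    (hO1 : Ostar ⊆ A) (hO2 : Ostar.card ≤ t)
    (hopt : (∑ j ∈ A \ Ostar,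
        sInf ((fun m => ∑ p ∈ SP, w j p * max (dist p m - τ) 0) '' (Kstar : Set P)))
      = trMedCost SP w A k t τ) :
    ∑ i, trMedCost SP w (𝒜 i) k ((Ostar ∩ 𝒜 i).card) (2 * τ) ≤
      2 * trMedCost SP w A k t τ := by
  classical
  -- groups are subsets of A
  have hsubA : ∀ i : Fin s, 𝒜 i ⊆ A := by
    intro i
    rw [hA]
    intro j hj
    exact Finset.mem_biUnion.2 ⟨i, Finset.mem_univ i, hj⟩
  -- projection to group supports
  have hex : ∀ (i : Fin s) (m : P), ∃ u ∈ nodeSupp SP w (𝒜 i),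
      ∀ p ∈ nodeSupp SP w (𝒜 i), dist m u ≤ dist m p := fun i m =>
    (nodeSupp SP w (𝒜 i)).exists_min_image (fun p => dist m p) (hsupp i)
  choose q hq1 hq2 using hex
  -- abbreviations
  set F : ι → P → ℝ := fun j m => ∑ p ∈ SP, w j p * max (dist p m - τ) 0 with hF
  set G : ι → P → ℝ := fun j m => ∑ p ∈ SP, w j p * max (dist p m - 2 * τ) 0 with hG
  -- key pointwise bound
  have hkey : ∀ (i : Fin s), ∀ j ∈ 𝒜 i, ∀ m : P, G j (q i m) ≤ 2 * F j m := by
    intro i j hj m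
    exact aux_key SP w (𝒜 i) j hj (hw0 j (hsubA i hj)) (hw1 j (hsubA i hj)) τ m (q i m)
      (hq2 i m)
  -- sInf of F over Kstar is attained
  have hFbound : ∀ (i : Fin s), ∀ j ∈ 𝒜 i,
      sInf (G j '' ((Kstar.image (q i) : Finset P) : Set P)) ≤
        2 * sInf (F j '' (Kstar : Set P)) := by
    intro i j hj
    obtain ⟨m, hm, hmmin⟩ := Kstar.exists_min_image (F j) hK2
    have hinf : sInf (F j '' (Kstar : Set P)) = F j m := by
      apply le_antisymm
      · exact csInf_le ((Kstar.finite_toSet.image _).bddBelow) ⟨m, hm, rfl⟩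
      · have hne : (F j '' (Kstar : Set P)).Nonempty := ⟨F j m, m, hm, rfl⟩
        apply le_csInf hne
        rintro b ⟨m', hm', rfl⟩
        exact hmmin m' hm'
    rw [hinf]
    calc sInf (G j '' ((Kstar.image (q i) : Finset P) : Set P))
        ≤ G j (q i m) := by
          apply csInf_le (((Kstar.image (q i)).finite_toSet.image _).bddBelow)
          exact ⟨q i m, Finset.mem_coe.2 (Finset.mem_image.2 ⟨m, hm, rfl⟩), rfl⟩
      _ ≤ 2 * F j m := hkey i j hj m
  -- each local cost is at most the candidate cost
  have hlocal : ∀ i : Fin s,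
      trMedCost SP w (𝒜 i) k ((Ostar ∩ 𝒜 i).card) (2 * τ) ≤
        ∑ j ∈ 𝒜 i \ (Ostar ∩ 𝒜 i),
          sInf (G j '' ((Kstar.image (q i) : Finset P) : Set P)) := by
    intro i
    apply csInf_le
    · -- bounded below by 0
      refine ⟨0, ?_⟩
      rintro c ⟨K, O, hKs, hKne, hKc, hOs, hOc, rfl⟩
      apply Finset.sum_nonneg
      intro j hj
      have hjA : j ∈ A := hsubA i (Finset.mem_sdiff.1 hj).1
      apply Real.sInf_nonneg
      rintro x ⟨m', hm', rfl⟩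
      apply Finset.sum_nonneg
      intro p hp
      exact mul_nonneg (hw0 j hjA p hp) (le_max_right _ _)
    · refine ⟨Kstar.image (q i), Ostar ∩ 𝒜 i, ?_, hK2.image _, ?_, ?_, le_rfl, rfl⟩
      · intro u hu
        obtain ⟨m, _, rfl⟩ := Finset.mem_image.1 hu
        exact hq1 i m
      · exact (Finset.card_image_le).trans hK3
      · exact Finset.inter_subset_right
  -- combine
  have hsdiff : ∀ i : Fin s, 𝒜 i \ (Ostar ∩ 𝒜 i) = 𝒜 i \ Ostar := by
    intro i
    ext j
    simp only [Finset.mem_sdiff, Finset.mem_inter]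
    tauto
  have hpart : A \ Ostar = Finset.univ.biUnion (fun i => 𝒜 i \ Ostar) := by
    subst hA
    ext j
    simp only [Finset.mem_sdiff, Finset.mem_biUnion, Finset.mem_univ, true_and]
    tauto
  have hpd : ((Finset.univ : Finset (Fin s)) : Set (Fin s)).PairwiseDisjoint
      (fun i => 𝒜 i \ Ostar) := by
    intro i _ j _ hij
    exact (hdisj i j hij).mono Finset.sdiff_subset Finset.sdiff_subset
  calc ∑ i, trMedCost SP w (𝒜 i) k ((Ostar ∩ 𝒜 i).card) (2 * τ)
      ≤ ∑ i, ∑ j ∈ 𝒜 i \ Ostar, 2 * sInf (F j '' (Kstar : Set P)) := by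
        apply Finset.sum_le_sum
        intro i _
        refine (hlocal i).trans ?_
        rw [hsdiff i]
        exact Finset.sum_le_sum fun j hj => hFbound i j (Finset.mem_sdiff.1 hj).1
    _ = 2 * ∑ i, ∑ j ∈ 𝒜 i \ Ostar, sInf (F j '' (Kstar : Set P)) := by
        rw [Finset.mul_sum]
        exact Finset.sum_congr rfl fun i _ => (Finset.mul_sum _ _ _).symm
    _ = 2 * ∑ j ∈ A \ Ostar, sInf (F j '' (Kstar : Set P)) := by
        rw [hpart, Finset.sum_biUnion hpd]
    _ = 2 * trMedCost SP w A k t τ := by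
        rw [← hopt]
end

section
/- In the uncertain setup with truncated distances, let Z ⊆ A be nonempty, k ≥ 1, t ≥ 0 and τ ≥ 0. If the truncated (k,t)-median cost satisfies C(Z,k,t,ρ_τ) ≥ τ, then the (k,t)-center-g cost satisfies Cg(Z,k,t) ≥ τ/3. -/
open Metric Finset

/-- The uncertain (k,t)-center-g cost `Cg(Z,k,t)`: the infimum over centers `K`,
outliers `O` and assignments `π` of the expectation, over independent realizations
`σ` of the nodes, of the maximum assignment distance. -/
noncomputable def cgCost {P : Type*} {ι : Type*} [MetricSpace P] [DecidableEq ι]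
    (SP : Finset P) (w : ι → P → ℝ) (Z : Finset ι) (k t : ℕ) : ℝ :=
  sInf { c : ℝ | ∃ K : Finset P, K.Nonempty ∧ K.card ≤ k ∧
    ∃ O : Finset ι, O ⊆ Z ∧ O.card ≤ t ∧
    ∃ π : ι → P, (∀ j ∈ Z \ O, π j ∈ K) ∧
    c = ∑ σ ∈ Z.pi (fun _ => SP),
      (∏ j ∈ Z.attach, w j.1 (σ j.1 j.2)) *
      sSup (insert 0 { x : ℝ | ∃ j, ∃ hj : j ∈ Z \ O,
        x = dist (σ j (Finset.sdiff_subset hj)) (π j) }) }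

/-- Expectation of a product-form functional over independent realizations. -/
lemma expect_prod_eq {P : Type*} {ι : Type*} [DecidableEq ι]
    (SP : Finset P) (Z : Finset ι) (f : ι → P → ℝ) :
    ∑ σ ∈ Z.pi (fun _ => SP), ∏ x ∈ Z.attach, f x.1 (σ x.1 x.2)
      = ∏ i ∈ Z, ∑ p ∈ SP, f i p :=
  (Finset.prod_sum Z (fun _ => SP) f).symm

/-- Lemma 6.10: if the truncated (k,t)-median cost is at least `τ`, then the
(k,t)-center-g cost is at least `τ/3`. -/
theorem cgCost_ge_of_trMedCost_ge {P : Type*} {ι : Type*} [MetricSpace P]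
    [DecidableEq P] [DecidableEq ι]
    (SP : Finset P) (hSP : SP.Nonempty)
    (A : Finset ι) (w : ι → P → ℝ)
    (hw0 : ∀ j ∈ A, ∀ p ∈ SP, 0 ≤ w j p)
    (hw1 : ∀ j ∈ A, ∑ p ∈ SP, w j p = 1)
    (Z : Finset ι) (hZA : Z ⊆ A) (hZne : Z.Nonempty)
    (k t : ℕ) (hk : 1 ≤ k) (τ : ℝ) (hτ : 0 ≤ τ)
    (h : trMedCost SP w Z k t τ ≥ τ) :
    cgCost SP w Z k t ≥ τ / 3 := by
  obtain ⟨p0, hp0⟩ := hSP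
  -- the median candidate set is bounded below by 0
  have hmedbdd : ∀ u ∈ { c : ℝ | ∃ (K : Finset P) (O : Finset ι),
      K ⊆ nodeSupp SP w Z ∧ K.Nonempty ∧ K.card ≤ k ∧ O ⊆ Z ∧ O.card ≤ t ∧
      c = ∑ j ∈ Z \ O,
        sInf ((fun m => ∑ p ∈ SP, w j p * max (dist p m - τ) 0) '' (K : Set P)) },
      (0:ℝ) ≤ u := by
    rintro u ⟨K, O, hKsupp, hKne, hKc, hOZ, hOc, rfl⟩
    refine Finset.sum_nonneg fun j hj => Real.sInf_nonneg ?_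
    rintro x ⟨m, hm, rfl⟩
    refine Finset.sum_nonneg fun p hp => mul_nonneg ?_ (le_max_right _ _)
    exact hw0 j (hZA (Finset.mem_sdiff.mp hj).1) p hp
  have hmedBB : BddBelow { c : ℝ | ∃ (K : Finset P) (O : Finset ι),
      K ⊆ nodeSupp SP w Z ∧ K.Nonempty ∧ K.card ≤ k ∧ O ⊆ Z ∧ O.card ≤ t ∧
      c = ∑ j ∈ Z \ O,
        sInf ((fun m => ∑ p ∈ SP, w j p * max (dist p m - τ) 0) '' (K : Set P)) } :=
    ⟨0, hmedbdd⟩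
  -- nodeSupp is nonempty
  obtain ⟨j0, hj0⟩ := hZne
  have hsupp_ne : ∃ q, q ∈ nodeSupp SP w Z := by
    by_contra hc
    push_neg at hc
    have h1 : ∑ p ∈ SP, w j0 p = 1 := hw1 j0 (hZA hj0)
    have h2 : ∀ p ∈ SP, w j0 p ≤ 0 := by
      intro p hp
      by_contra hpos
      push_neg at hpos
      exact hc p (Finset.mem_biUnion.mpr ⟨j0, hj0, Finset.mem_filter.mpr ⟨hp, hpos⟩⟩)
    have : (1:ℝ) ≤ 0 := h1 ▸ Finset.sum_nonpos h2
    linarith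
  unfold cgCost
  refine le_csInf ⟨_, ⟨{p0}, Finset.singleton_nonempty _, by simpa using hk, ∅,
    Finset.empty_subset _, by simp, fun _ => p0, fun j _ => Finset.mem_singleton_self _, rfl⟩⟩ ?_
  rintro c ⟨K, hKne, hKcard, O, hOZ, hOcard, π, hπ, rfl⟩
  set c := ∑ σ ∈ Z.pi (fun _ => SP),
      (∏ j ∈ Z.attach, w j.1 (σ j.1 j.2)) *
      sSup (insert 0 { x : ℝ | ∃ j, ∃ hj : j ∈ Z \ O,
        x = dist (σ j (Finset.sdiff_subset hj)) (π j) }) with hcdef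
  -- basic facts about realizations
  have hμ0 : ∀ σ ∈ Z.pi (fun _ => SP), (0:ℝ) ≤ ∏ j ∈ Z.attach, w j.1 (σ j.1 j.2) := by
    intro σ hσ
    refine Finset.prod_nonneg fun x _ => ?_
    exact hw0 x.1 (hZA x.2) _ (Finset.mem_pi.mp hσ x.1 x.2)
  have hMfin : ∀ σ : (∀ i ∈ Z, P), (insert (0:ℝ) { x : ℝ | ∃ j, ∃ hj : j ∈ Z \ O,
      x = dist (σ j (Finset.sdiff_subset hj)) (π j) }).Finite := by
    intro σ
    refine Set.Finite.insert _ (Set.Finite.subset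
      (((Z \ O).finite_toSet).image (fun j => if h : j ∈ Z then dist (σ j h) (π j) else 0)) ?_)
    rintro x ⟨j, hj, rfl⟩
    refine ⟨j, Finset.mem_coe.mpr hj, ?_⟩
    dsimp only
    rw [dif_pos (Finset.sdiff_subset hj)]
  have hM0 : ∀ σ : (∀ i ∈ Z, P), (0:ℝ) ≤ sSup (insert (0:ℝ) { x : ℝ | ∃ j, ∃ hj : j ∈ Z \ O,
      x = dist (σ j (Finset.sdiff_subset hj)) (π j) }) := by
    intro σ
    exact le_csSup (hMfin σ).bddAbove (Set.mem_insert _ _)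
  have hMX : ∀ σ : (∀ i ∈ Z, P), ∀ x : {i // i ∈ Z}, x.1 ∈ Z \ O →
      dist (σ x.1 x.2) (π x.1) ≤ sSup (insert (0:ℝ)
        { x : ℝ | ∃ j, ∃ hj : j ∈ Z \ O, x = dist (σ j (Finset.sdiff_subset hj)) (π j) }) := by
    intro σ x hx
    exact le_csSup (hMfin σ).bddAbove (Set.mem_insert_of_mem _ ⟨x.1, hx, rfl⟩)
  have hc0 : 0 ≤ c := by
    rw [hcdef]
    exact Finset.sum_nonneg fun σ hσ => mul_nonneg (hμ0 σ hσ) (hM0 σ)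
  rcases eq_or_lt_of_le hτ with hτ0 | hτpos
  · rw [← hτ0]; simpa using hc0
  -- main case : τ > 0 ; argue by contradiction
  by_contra hlt
  push_neg at hlt
  have hcτ : c < τ / 3 := hlt
  -- if Z \ O is empty, the median cost is at most 0 < τ
  rcases Finset.eq_empty_or_nonempty (Z \ O) with hDemp | hDne
  · obtain ⟨q, hq⟩ := hsupp_ne
    have : trMedCost SP w Z k t τ ≤ 0 := by
      refine csInf_le hmedBB ⟨{q}, O, by simpa using hq, Finset.singleton_nonempty _,
        by simpa using hk, hOZ, hOcard, ?_⟩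
      rw [hDemp]; simp
    linarith
  -- main case: Z \ O nonempty, τ > 0, c < τ/3
  set a : ℝ := 2 * τ / 3 with ha
  have hapos : 0 < a := by rw [ha]; linarith
  set χf : ι → P → ℝ := fun i p => if dist p (π i) ≤ a then 1 else 0 with hχf
  set Yf : ι → P → ℝ := fun i p => max (dist p (π i) - a) 0 with hYf
  set Fr : ι → P → ℝ := fun i p => if i ∈ Z \ O then χf i p else 1 with hFr
  set Pv : ι → ℝ := fun i => ∑ p ∈ SP, w i p * χf i p with hPv
  set ev : ι → ℝ := fun i => ∑ p ∈ SP, w i p * Yf i p with hev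
  set Q : ℝ := ∏ i ∈ Z \ O, Pv i with hQdef
  have hχ01 : ∀ i p, 0 ≤ χf i p ∧ χf i p ≤ 1 := by
    intro i p; rw [hχf]; dsimp only; split <;> norm_num
  have hYf0 : ∀ i p, 0 ≤ Yf i p := fun i p => le_max_right _ _
  have hPv0 : ∀ i ∈ Z, 0 ≤ Pv i := by
    intro i hi
    exact Finset.sum_nonneg fun p hp =>
      mul_nonneg (hw0 i (hZA hi) p hp) (hχ01 i p).1
  have hPv1 : ∀ i ∈ Z, Pv i ≤ 1 := by
    intro i hi
    calc Pv i ≤ ∑ p ∈ SP, w i p := Finset.sum_le_sum fun p hp =>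
          mul_le_of_le_one_right (hw0 i (hZA hi) p hp) (hχ01 i p).2
    _ = 1 := hw1 i (hZA hi)
  have hev0 : ∀ i ∈ Z, 0 ≤ ev i := by
    intro i hi
    exact Finset.sum_nonneg fun p hp => mul_nonneg (hw0 i (hZA hi) p hp) (hYf0 i p)
  have hQ0 : 0 ≤ Q := Finset.prod_nonneg fun i hi => hPv0 i (Finset.sdiff_subset hi)
  have hQ1 : Q ≤ 1 := Finset.prod_le_one
    (fun i hi => hPv0 i (Finset.sdiff_subset hi))
    (fun i hi => hPv1 i (Finset.sdiff_subset hi))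
  -- total mass is one
  have hmass : ∑ σ ∈ Z.pi (fun _ => SP), (∏ x ∈ Z.attach, w x.1 (σ x.1 x.2)) = 1 := by
    rw [expect_prod_eq SP Z w]
    exact Finset.prod_eq_one fun i hi => hw1 i (hZA hi)
  -- expectation of the all-close indicator
  have hR : ∑ σ ∈ Z.pi (fun _ => SP),
      (∏ x ∈ Z.attach, w x.1 (σ x.1 x.2)) * (∏ x ∈ Z.attach, Fr x.1 (σ x.1 x.2)) = Q := by
    have e1 : ∑ σ ∈ Z.pi (fun _ => SP),
        (∏ x ∈ Z.attach, w x.1 (σ x.1 x.2)) * (∏ x ∈ Z.attach, Fr x.1 (σ x.1 x.2))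
        = ∑ σ ∈ Z.pi (fun _ => SP), ∏ x ∈ Z.attach, (w x.1 (σ x.1 x.2) * Fr x.1 (σ x.1 x.2)) :=
      Finset.sum_congr rfl fun σ _ => Finset.prod_mul_distrib.symm
    rw [e1, expect_prod_eq SP Z (fun i p => w i p * Fr i p), hQdef]
    refine ((Finset.prod_subset Finset.sdiff_subset fun i hi hni => ?_).symm).trans
      (Finset.prod_congr rfl fun i hi => ?_)
    · simp only [hFr, if_neg hni, mul_one]
      exact hw1 i (hZA hi)
    · simp only [hFr, if_pos hi, hPv]
  -- expectation of each truncated-excess term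
  have hterm : ∀ x ∈ Z.attach, x.1 ∈ Z \ O →
      ∑ σ ∈ Z.pi (fun _ => SP), (∏ y ∈ Z.attach, w y.1 (σ y.1 y.2)) *
        (Yf x.1 (σ x.1 x.2) * ∏ y ∈ Z.attach.erase x, Fr y.1 (σ y.1 y.2))
      = ev x.1 * ∏ i ∈ (Z \ O).erase x.1, Pv i := by
    intro x hx hxD
    set Hx : ι → P → ℝ := fun i p => if i = x.1 then Yf i p else Fr i p with hHx
    have e1 : ∀ σ ∈ Z.pi (fun _ => SP),
        (∏ y ∈ Z.attach, w y.1 (σ y.1 y.2)) *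
          (Yf x.1 (σ x.1 x.2) * ∏ y ∈ Z.attach.erase x, Fr y.1 (σ y.1 y.2))
        = ∏ y ∈ Z.attach, (w y.1 (σ y.1 y.2) * Hx y.1 (σ y.1 y.2)) := by
      intro σ _
      rw [Finset.prod_mul_distrib]
      congr 1
      rw [← Finset.mul_prod_erase Z.attach (fun y => Hx y.1 (σ y.1 y.2)) (Finset.mem_attach Z x)]
      congr 1
      · simp [hHx]
      · refine Finset.prod_congr rfl fun y hy => ?_
        have hyx : y.1 ≠ x.1 := fun hcon => (Finset.mem_erase.mp hy).1 (Subtype.ext hcon)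
        simp [hHx, hyx]
    rw [Finset.sum_congr rfl e1, expect_prod_eq SP Z (fun i p => w i p * Hx i p),
      ← Finset.mul_prod_erase Z (fun i => ∑ p ∈ SP, w i p * Hx i p) x.2]
    congr 1
    · simp [hHx, hev]
    · refine ((Finset.prod_subset (Finset.erase_subset_erase _ Finset.sdiff_subset)
        fun i hi hni => ?_).symm).trans (Finset.prod_congr rfl fun i hi => ?_)
      · have hix : i ≠ x.1 := (Finset.mem_erase.mp hi).1
        have hiD : i ∉ Z \ O := fun hcon => hni (Finset.mem_erase.mpr ⟨hix, hcon⟩)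
        simp only [hHx, if_neg hix, hFr, if_neg hiD, mul_one]
        exact hw1 i (hZA (Finset.mem_erase.mp hi).2)
      · have hix : i ≠ x.1 := (Finset.mem_erase.mp hi).1
        have hiD : i ∈ Z \ O := (Finset.mem_erase.mp hi).2
        simp only [hHx, if_neg hix, hFr, if_pos hiD, hPv]
  -- pointwise inequality
  have hpt : ∀ σ ∈ Z.pi (fun _ => SP),
      a * (1 - ∏ x ∈ Z.attach, Fr x.1 (σ x.1 x.2))
        + ∑ x ∈ Z.attach, (if x.1 ∈ Z \ O then
            Yf x.1 (σ x.1 x.2) * ∏ y ∈ Z.attach.erase x, Fr y.1 (σ y.1 y.2) else 0)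
      ≤ sSup (insert (0:ℝ) { x : ℝ | ∃ j, ∃ hj : j ∈ Z \ O,
          x = dist (σ j (Finset.sdiff_subset hj)) (π j) }) := by
    intro σ hσ
    by_cases hall : ∀ x : {i // i ∈ Z}, x.1 ∈ Z \ O → dist (σ x.1 x.2) (π x.1) ≤ a
    · have hR1 : ∏ x ∈ Z.attach, Fr x.1 (σ x.1 x.2) = 1 := by
        refine Finset.prod_eq_one fun x _ => ?_
        by_cases hxD : x.1 ∈ Z \ O
        · simp only [hFr, if_pos hxD, hχf, if_pos (hall x hxD)]
        · simp only [hFr, if_neg hxD]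
      have hS0 : ∑ x ∈ Z.attach, (if x.1 ∈ Z \ O then
          Yf x.1 (σ x.1 x.2) * ∏ y ∈ Z.attach.erase x, Fr y.1 (σ y.1 y.2) else 0) = 0 := by
        refine Finset.sum_eq_zero fun x _ => ?_
        by_cases hxD : x.1 ∈ Z \ O
        · have hy0 : Yf x.1 (σ x.1 x.2) = 0 := by
            simp only [hYf]; exact max_eq_right (by linarith [hall x hxD])
          rw [if_pos hxD, hy0, zero_mul]
        · rw [if_neg hxD]
      rw [hR1, hS0]
      simpa using hM0 σ
    · push_neg at hall
      obtain ⟨x0, hx0D, hx0a⟩ := hall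
      have hx0M := hMX σ x0 hx0D
      have hR0 : ∏ x ∈ Z.attach, Fr x.1 (σ x.1 x.2) = 0 :=
        Finset.prod_eq_zero (Finset.mem_attach Z x0)
          (by simp only [hFr, if_pos hx0D, hχf, if_neg (not_le.mpr hx0a)])
      rw [hR0]
      by_cases hone : ∀ y : {i // i ∈ Z}, y ≠ x0 → y.1 ∈ Z \ O →
          dist (σ y.1 y.2) (π y.1) ≤ a
      · have hW1 : ∏ y ∈ Z.attach.erase x0, Fr y.1 (σ y.1 y.2) = 1 := by
          refine Finset.prod_eq_one fun y hy => ?_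
          by_cases hyD : y.1 ∈ Z \ O
          · simp only [hFr, if_pos hyD, hχf,
              if_pos (hone y (Finset.mem_erase.mp hy).1 hyD)]
          · simp only [hFr, if_neg hyD]
        have hSval : ∑ x ∈ Z.attach, (if x.1 ∈ Z \ O then
            Yf x.1 (σ x.1 x.2) * ∏ y ∈ Z.attach.erase x, Fr y.1 (σ y.1 y.2) else 0)
            = Yf x0.1 (σ x0.1 x0.2) * ∏ y ∈ Z.attach.erase x0, Fr y.1 (σ y.1 y.2) := by
          refine (Finset.sum_eq_single_of_mem x0 (Finset.mem_attach Z x0)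
            fun y _ hyx => ?_).trans (if_pos hx0D)
          by_cases hyD : y.1 ∈ Z \ O
          · have hy0 : Yf y.1 (σ y.1 y.2) = 0 := by
              simp only [hYf]; exact max_eq_right (by linarith [hone y hyx hyD])
            rw [if_pos hyD, hy0, zero_mul]
          · rw [if_neg hyD]
        rw [hSval, hW1, mul_one]
        have hYx0 : Yf x0.1 (σ x0.1 x0.2) = dist (σ x0.1 x0.2) (π x0.1) - a := by
          simp only [hYf]; exact max_eq_left (by linarith)
        rw [hYx0]
        linarith
      · push_neg at hone
        obtain ⟨x1, hx1ne, hx1D, hx1a⟩ := hone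
        have hS0 : ∑ x ∈ Z.attach, (if x.1 ∈ Z \ O then
            Yf x.1 (σ x.1 x.2) * ∏ y ∈ Z.attach.erase x, Fr y.1 (σ y.1 y.2) else 0) = 0 := by
          refine Finset.sum_eq_zero fun y _ => ?_
          by_cases hyD : y.1 ∈ Z \ O
          · rw [if_pos hyD]
            by_cases hya : dist (σ y.1 y.2) (π y.1) ≤ a
            · have hy0 : Yf y.1 (σ y.1 y.2) = 0 := by
                simp only [hYf]; exact max_eq_right (by linarith)
              rw [hy0, zero_mul]
            · have hz : ∃ z : {i // i ∈ Z}, z ≠ y ∧ z.1 ∈ Z \ O ∧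
                  a < dist (σ z.1 z.2) (π z.1) := by
                by_cases hyx0 : y = x0
                · exact ⟨x1, by rw [hyx0]; exact hx1ne, hx1D, hx1a⟩
                · exact ⟨x0, fun hcon => hyx0 hcon.symm, hx0D, hx0a⟩
              obtain ⟨z, hzy, hzD, hza⟩ := hz
              have hW0 : ∏ y' ∈ Z.attach.erase y, Fr y'.1 (σ y'.1 y'.2) = 0 :=
                Finset.prod_eq_zero (Finset.mem_erase.mpr ⟨hzy, Finset.mem_attach Z z⟩)
                  (by simp only [hFr, if_pos hzD, hχf, if_neg (not_le.mpr hza)])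
              rw [hW0, mul_zero]
          · rw [if_neg hyD]
        rw [hS0]
        linarith
  -- key inequality
  have key : a * (1 - Q) + ∑ x ∈ Z.attach, (if x.1 ∈ Z \ O then
      ev x.1 * ∏ i ∈ (Z \ O).erase x.1, Pv i else 0) ≤ c := by
    have e2 : ∀ σ ∈ Z.pi (fun _ => SP),
        (∏ y ∈ Z.attach, w y.1 (σ y.1 y.2)) *
          (a * (1 - ∏ x ∈ Z.attach, Fr x.1 (σ x.1 x.2))
            + ∑ x ∈ Z.attach, (if x.1 ∈ Z \ O then
                Yf x.1 (σ x.1 x.2) * ∏ y ∈ Z.attach.erase x, Fr y.1 (σ y.1 y.2) else 0))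
        = a * (∏ y ∈ Z.attach, w y.1 (σ y.1 y.2))
          - a * ((∏ y ∈ Z.attach, w y.1 (σ y.1 y.2)) * ∏ x ∈ Z.attach, Fr x.1 (σ x.1 x.2))
          + ∑ x ∈ Z.attach, (if x.1 ∈ Z \ O then
              (∏ y ∈ Z.attach, w y.1 (σ y.1 y.2)) *
                (Yf x.1 (σ x.1 x.2) * ∏ y ∈ Z.attach.erase x, Fr y.1 (σ y.1 y.2)) else 0) := by
      intro σ _
      rw [mul_add, Finset.mul_sum]
      simp only [mul_ite, mul_zero]
      ring
    have e1 : ∑ σ ∈ Z.pi (fun _ => SP),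
        (∏ y ∈ Z.attach, w y.1 (σ y.1 y.2)) *
          (a * (1 - ∏ x ∈ Z.attach, Fr x.1 (σ x.1 x.2))
            + ∑ x ∈ Z.attach, (if x.1 ∈ Z \ O then
                Yf x.1 (σ x.1 x.2) * ∏ y ∈ Z.attach.erase x, Fr y.1 (σ y.1 y.2) else 0))
        = a * (1 - Q) + ∑ x ∈ Z.attach, (if x.1 ∈ Z \ O then
            ev x.1 * ∏ i ∈ (Z \ O).erase x.1, Pv i else 0) := by
      rw [Finset.sum_congr rfl e2, Finset.sum_add_distrib, Finset.sum_sub_distrib,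
        ← Finset.mul_sum, ← Finset.mul_sum, hmass, hR, Finset.sum_comm]
      congr 1
      · ring
      · refine Finset.sum_congr rfl fun x hx => ?_
        by_cases hxD : x.1 ∈ Z \ O
        · simp only [if_pos hxD]
          exact hterm x hx hxD
        · simp only [if_neg hxD, Finset.sum_const_zero]
    calc a * (1 - Q) + ∑ x ∈ Z.attach, (if x.1 ∈ Z \ O then
          ev x.1 * ∏ i ∈ (Z \ O).erase x.1, Pv i else 0)
        = ∑ σ ∈ Z.pi (fun _ => SP),
          (∏ y ∈ Z.attach, w y.1 (σ y.1 y.2)) *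
            (a * (1 - ∏ x ∈ Z.attach, Fr x.1 (σ x.1 x.2))
              + ∑ x ∈ Z.attach, (if x.1 ∈ Z \ O then
                  Yf x.1 (σ x.1 x.2) * ∏ y ∈ Z.attach.erase x, Fr y.1 (σ y.1 y.2) else 0)) :=
        e1.symm
      _ ≤ ∑ σ ∈ Z.pi (fun _ => SP),
          (∏ y ∈ Z.attach, w y.1 (σ y.1 y.2)) *
            sSup (insert (0:ℝ) { x : ℝ | ∃ j, ∃ hj : j ∈ Z \ O,
              x = dist (σ j (Finset.sdiff_subset hj)) (π j) }) :=
        Finset.sum_le_sum fun σ hσ => mul_le_mul_of_nonneg_left (hpt σ hσ) (hμ0 σ hσ)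
      _ = c := hcdef.symm
  -- the sum term dominates Q times the total truncated excess
  have hEtot : Q * ∑ j ∈ Z \ O, ev j ≤ ∑ x ∈ Z.attach, (if x.1 ∈ Z \ O then
      ev x.1 * ∏ i ∈ (Z \ O).erase x.1, Pv i else 0) := by
    rw [Finset.sum_attach Z (fun i => if i ∈ Z \ O then
        ev i * ∏ i' ∈ (Z \ O).erase i, Pv i' else 0),
      Finset.sum_ite_mem Z (Z \ O), Finset.inter_eq_right.mpr Finset.sdiff_subset,
      Finset.mul_sum]
    refine Finset.sum_le_sum fun j hj => ?_
    have h1 : Q ≤ ∏ i ∈ (Z \ O).erase j, Pv i := by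
      rw [hQdef, ← Finset.mul_prod_erase (Z \ O) Pv hj]
      exact mul_le_of_le_one_left
        (Finset.prod_nonneg fun i hi =>
          hPv0 i (Finset.sdiff_subset (Finset.mem_erase.mp hi).2))
        (hPv1 j (Finset.sdiff_subset hj))
    calc Q * ev j ≤ (∏ i ∈ (Z \ O).erase j, Pv i) * ev j :=
        mul_le_mul_of_nonneg_right h1 (hev0 j (Finset.sdiff_subset hj))
      _ = ev j * ∏ i ∈ (Z \ O).erase j, Pv i := mul_comm _ _
  set E : ℝ := ∑ j ∈ Z \ O, ev j with hEdef
  have hE0 : 0 ≤ E := Finset.sum_nonneg fun j hj => hev0 j (Finset.sdiff_subset hj)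
  have hElt : E < 2 * τ / 3 := by
    have h1 : a * (1 - Q) + Q * E ≤ c := le_trans (by linarith [hEtot]) key
    nlinarith [hcτ, hQ0, hQ1, hE0, hτpos]
  -- per-node expected distance bound
  have hEj : ∀ j, ∀ hj : j ∈ Z \ O, (∑ p ∈ SP, w j p * dist p (π j)) ≤ c := by
    intro j hj
    have hjZ : j ∈ Z := Finset.sdiff_subset hj
    set Hj : ι → P → ℝ := fun i p => if i = j then dist p (π j) else 1 with hHj
    have e1 : ∀ σ ∈ Z.pi (fun _ => SP),
        (∏ y ∈ Z.attach, w y.1 (σ y.1 y.2)) * dist (σ j hjZ) (π j)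
        = ∏ y ∈ Z.attach, (w y.1 (σ y.1 y.2) * Hj y.1 (σ y.1 y.2)) := by
      intro σ _
      rw [Finset.prod_mul_distrib]
      congr 1
      rw [Finset.prod_eq_single_of_mem (⟨j, hjZ⟩ : {i // i ∈ Z})
        (Finset.mem_attach _ _) fun y _ hyx => ?_]
      · simp [hHj]
      · have hyj : y.1 ≠ j := fun hcon => hyx (Subtype.ext hcon)
        simp [hHj, hyj]
    have e2 : ∏ i ∈ Z, (∑ p ∈ SP, w i p * Hj i p) = ∑ p ∈ SP, w j p * dist p (π j) := by
      rw [← Finset.mul_prod_erase Z (fun i => ∑ p ∈ SP, w i p * Hj i p) hjZ]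
      have h1 : (∑ p ∈ SP, w j p * Hj j p) = ∑ p ∈ SP, w j p * dist p (π j) :=
        Finset.sum_congr rfl fun p _ => by simp [hHj]
      have h2 : ∏ i ∈ Z.erase j, (∑ p ∈ SP, w i p * Hj i p) = 1 := by
        refine Finset.prod_eq_one fun i hi => ?_
        have hij : i ≠ j := (Finset.mem_erase.mp hi).1
        simp only [hHj, if_neg hij, mul_one]
        exact hw1 i (hZA (Finset.mem_erase.mp hi).2)
      rw [h1, h2, mul_one]
    have e3 : ∑ σ ∈ Z.pi (fun _ => SP),
        (∏ y ∈ Z.attach, w y.1 (σ y.1 y.2)) * dist (σ j hjZ) (π j)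
        = ∑ p ∈ SP, w j p * dist p (π j) := by
      rw [Finset.sum_congr rfl e1, expect_prod_eq SP Z (fun i p => w i p * Hj i p), e2]
    rw [← e3, hcdef]
    exact Finset.sum_le_sum fun σ hσ =>
      mul_le_mul_of_nonneg_left (hMX σ ⟨j, hjZ⟩ hj) (hμ0 σ hσ)
  -- choose representatives in the support
  have hrep : ∀ m ∈ (Z \ O).image π, ∃ q, q ∈ nodeSupp SP w Z ∧ dist q m ≤ c := by
    intro m hm
    obtain ⟨j, hjD, rfl⟩ := Finset.mem_image.mp hm
    have hjZ : j ∈ Z := Finset.sdiff_subset hjD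
    have hFne : (SP.filter fun p => 0 < w j p).Nonempty := by
      by_contra hcon
      rw [Finset.not_nonempty_iff_eq_empty, Finset.filter_eq_empty_iff] at hcon
      have h2 : ∀ p ∈ SP, w j p ≤ 0 := fun p hp => not_lt.mp (hcon hp)
      have h3 := hw1 j (hZA hjZ)
      have h4 := Finset.sum_nonpos h2
      linarith
    obtain ⟨q, hqF, hqmin⟩ := Finset.exists_min_image
      (SP.filter fun p => 0 < w j p) (fun p => dist p (π j)) hFne
    refine ⟨q, Finset.mem_biUnion.mpr ⟨j, hjZ,
      Finset.mem_filter.mpr (Finset.mem_filter.mp hqF)⟩, ?_⟩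
    have h1 : ∀ p ∈ SP, w j p * dist q (π j) ≤ w j p * dist p (π j) := by
      intro p hp
      by_cases hpp : 0 < w j p
      · exact mul_le_mul_of_nonneg_left (hqmin p (Finset.mem_filter.mpr ⟨hp, hpp⟩)) hpp.le
      · have h0 : w j p = 0 := le_antisymm (not_lt.mp hpp) (hw0 j (hZA hjZ) p hp)
        simp [h0]
    have h2 : dist q (π j) ≤ ∑ p ∈ SP, w j p * dist p (π j) := by
      calc dist q (π j) = (∑ p ∈ SP, w j p) * dist q (π j) := by
            rw [hw1 j (hZA hjZ), one_mul]
        _ = ∑ p ∈ SP, w j p * dist q (π j) := Finset.sum_mul _ _ _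
        _ ≤ _ := Finset.sum_le_sum h1
    exact h2.trans (hEj j hjD)
  obtain ⟨g, hg⟩ : ∃ g : P → P, ∀ m ∈ (Z \ O).image π,
      g m ∈ nodeSupp SP w Z ∧ dist (g m) m ≤ c := by
    choose f hf1 hf2 using hrep
    exact ⟨fun m => if hm : m ∈ (Z \ O).image π then f m hm else p0,
      fun m hm => by dsimp only; rw [dif_pos hm]; exact ⟨hf1 m hm, hf2 m hm⟩⟩
  set K' : Finset P := ((Z \ O).image π).image g with hK'def
  have hK'supp : K' ⊆ nodeSupp SP w Z := by
    intro q hq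
    obtain ⟨m, hm, rfl⟩ := Finset.mem_image.mp hq
    exact (hg m hm).1
  have hK'ne : K'.Nonempty := (hDne.image π).image g
  have hK'card : K'.card ≤ k := by
    calc K'.card ≤ ((Z \ O).image π).card := Finset.card_image_le
    _ ≤ K.card := Finset.card_le_card (fun m hm => by
        obtain ⟨j, hj, rfl⟩ := Finset.mem_image.mp hm; exact hπ j hj)
    _ ≤ k := hKcard
  -- the median candidate value
  have hv_le : (∑ j ∈ Z \ O,
      sInf ((fun m => ∑ p ∈ SP, w j p * max (dist p m - τ) 0) '' (K' : Set P))) ≤ E := by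
    rw [hEdef]
    refine Finset.sum_le_sum fun j hj => ?_
    have hmem : g (π j) ∈ (K' : Set P) :=
      Finset.mem_coe.mpr (Finset.mem_image_of_mem g (Finset.mem_image_of_mem π hj))
    have hbdd : BddBelow ((fun m => ∑ p ∈ SP, w j p * max (dist p m - τ) 0) '' (K' : Set P)) :=
      ((K'.finite_toSet).image _).bddBelow
    refine (csInf_le hbdd ⟨g (π j), hmem, rfl⟩).trans ?_
    simp only [hev]
    refine Finset.sum_le_sum fun p hp => ?_
    refine mul_le_mul_of_nonneg_left ?_
      (hw0 j (hZA (Finset.mem_sdiff.mp hj).1) p hp)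
    have hgd : dist (g (π j)) (π j) ≤ c := (hg (π j) (Finset.mem_image_of_mem π hj)).2
    have htri := dist_triangle p (π j) (g (π j))
    have hcomm : dist (π j) (g (π j)) = dist (g (π j)) (π j) := dist_comm _ _
    simp only [hYf]
    refine max_le ?_ (le_max_right _ _)
    have hd : dist p (g (π j)) - τ ≤ dist p (π j) - a := by
      rw [ha]; linarith [hcτ]
    exact hd.trans (le_max_left _ _)
  have hmed_le : trMedCost SP w Z k t τ ≤ ∑ j ∈ Z \ O,
      sInf ((fun m => ∑ p ∈ SP, w j p * max (dist p m - τ) 0) '' (K' : Set P)) := by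
    unfold trMedCost
    exact csInf_le hmedBB ⟨K', O, hK'supp, hK'ne, hK'card, hOZ, hOcard, rfl⟩
  have : τ ≤ E := le_trans h (le_trans hmed_le hv_le)
  linarith
end

section
/- Let X be a metric space, A a finite subset partitioned as A = A_1 ⊎ ⋯ ⊎ A_s with each A_i nonempty, and k ≥ 1 an integer. For each i let M_i ⊆ A_i be nonempty with |M_i| ≤ k and π_i : A_i → M_i an assignment; let π : A → M be the combined assignment with M = ∪_i M_i, let L = ∑_{j∈A} d(j, π(j)), and give each m ∈ M the weight w(m) = |{ j ∈ A : π(j) = m }|. Then there exists a nonempty K ⊆ M with |K| ≤ k such that ∑_{m∈M} w(m)·d(m,K) ≤ 2·( L + Cmed(A,k,0) ), where d(m,K) = min_{x∈K} d(m,x). -/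
open Metric Finset

/-- Theorem 2.1(i): there exists a weighted k-median solution on the preclustering
centers of cost at most `2(L + Cmed(A,k,0))`. -/
theorem exists_weighted_kmedian_solution {X : Type*} [MetricSpace X] [DecidableEq X]
    {s : ℕ} (hs : 0 < s) (𝒜 : Fin s → Finset X)
    (hdisj : ∀ i j, i ≠ j → Disjoint (𝒜 i) (𝒜 j))
    (hne : ∀ i, (𝒜 i).Nonempty)
    (A : Finset X) (hA : A = Finset.univ.biUnion 𝒜)
    (k : ℕ) (hk : 1 ≤ k)
    (Mi : Fin s → Finset X) (hMisub : ∀ i, Mi i ⊆ 𝒜 i)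
    (hMine : ∀ i, (Mi i).Nonempty) (hMicard : ∀ i, (Mi i).card ≤ k)
    (π : X → X) (hπ : ∀ i, ∀ j ∈ 𝒜 i, π j ∈ Mi i)
    (M : Finset X) (hM : M = Finset.univ.biUnion Mi)
    (L : ℝ) (hL : L = ∑ j ∈ A, dist j (π j))
    (w : X → ℝ) (hw : ∀ m, w m = ((A.filter fun j => π j = m).card : ℝ)) :
    ∃ K : Finset X, K ⊆ M ∧ K.Nonempty ∧ K.card ≤ k ∧
      ∑ m ∈ M, w m * infDist m (K : Set X) ≤ 2 * (L + medCost A k 0) := by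
  classical
  have i0 : Fin s := ⟨0, hs⟩
  -- M is nonempty
  obtain ⟨m0, hm0i⟩ := hMine i0
  have hm0 : m0 ∈ M := by
    rw [hM]; simp only [mem_biUnion, mem_univ, true_and]; exact ⟨i0, hm0i⟩
  have hMne : M.Nonempty := ⟨m0, hm0⟩
  -- π maps A into M
  have hπM : ∀ j ∈ A, π j ∈ M := by
    intro j hj
    rw [hA] at hj
    simp only [mem_biUnion, mem_univ, true_and] at hj
    obtain ⟨i, hi⟩ := hj
    rw [hM]; simp only [mem_biUnion, mem_univ, true_and]
    exact ⟨i, hπ i j hi⟩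
  -- A nonempty
  obtain ⟨a0, ha0i⟩ := hne i0
  have ha0 : a0 ∈ A := by
    rw [hA]; simp only [mem_biUnion, mem_univ, true_and]; exact ⟨i0, ha0i⟩
  -- nearest-point-in-M map
  have hσ : ∀ x : X, ∃ m ∈ M, ∀ m' ∈ M, dist x m ≤ dist x m' := by
    intro x
    exact M.exists_min_image (fun m => dist x m) hMne
  choose σ hσM hσmin using hσ
  -- weighted cost function
  set g : Finset X → ℝ := fun K => ∑ m ∈ M, w m * infDist m (K : Set X) with hg
  -- candidate family
  set F := M.powerset.filter (fun K => K.Nonempty ∧ K.card ≤ k) with hF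
  have hFne : F.Nonempty := by
    refine ⟨{m0}, ?_⟩
    simp only [hF, mem_filter, mem_powerset]
    exact ⟨by simpa using hm0, singleton_nonempty m0, by simpa using hk⟩
  obtain ⟨K₀, hK₀F, hK₀min⟩ := F.exists_min_image g hFne
  simp only [hF, mem_filter, mem_powerset] at hK₀F
  obtain ⟨hK₀M, hK₀ne, hK₀card⟩ := hK₀F
  refine ⟨K₀, hK₀M, hK₀ne, hK₀card, ?_⟩
  -- the feasible-cost set
  set S : Set ℝ := { c : ℝ | ∃ K O : Finset X, K ⊆ A ∧ K.Nonempty ∧ K.card ≤ k ∧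
    O ⊆ A ∧ O.card ≤ 0 ∧ c = ∑ p ∈ A \ O, infDist p (K : Set X) } with hSdef
  have hSne : S.Nonempty := by
    refine ⟨∑ p ∈ A \ (∅ : Finset X), infDist p (({a0} : Finset X) : Set X),
      {a0}, ∅, by simpa using ha0, singleton_nonempty a0, by simpa using hk,
      empty_subset A, by simp, rfl⟩
  -- key: for each feasible cost c there is a feasible K with g K ≤ 2(L+c)
  have key : ∀ c ∈ S, g K₀ ≤ 2 * (L + c) := by
    rintro c ⟨K', O, hK'A, hK'ne, hK'card, hOA, hOcard, hc⟩
    have hO : O = ∅ := card_eq_zero.mp (Nat.le_zero.mp hOcard)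
    subst hO
    rw [sdiff_empty] at hc
    -- projected center set
    set K := K'.image σ with hK
    have hKF : K ∈ F := by
      simp only [hF, mem_filter, mem_powerset]
      refine ⟨?_, hK'ne.image σ, le_trans (card_image_le) hK'card⟩
      intro x hx
      simp only [hK, mem_image] at hx
      obtain ⟨y, _, rfl⟩ := hx
      exact hσM y
    -- step A: pointwise bound
    have stepA : ∀ m ∈ M, infDist m (K : Set X) ≤ 2 * infDist m (K' : Set X) := by
      intro m hm
      obtain ⟨x, hxK', hxd⟩ :=
        (K'.finite_toSet.isCompact).exists_infDist_eq_dist (by exact_mod_cast hK'ne) m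
      have h1 : infDist m (K : Set X) ≤ dist m (σ x) := by
        apply infDist_le_dist_of_mem
        exact_mod_cast mem_image_of_mem σ (by exact_mod_cast hxK')
      have h2 : dist m (σ x) ≤ dist m x + dist x (σ x) := dist_triangle m x (σ x)
      have h3 : dist x (σ x) ≤ dist x m := hσmin x m hm
      rw [dist_comm x m] at h3
      rw [hxd] at *
      linarith
    -- step B: weighted sum over M equals sum over A of assigned distances
    have stepB : ∀ K'' : Finset X,
        ∑ m ∈ M, w m * infDist m (K'' : Set X)
          = ∑ j ∈ A, infDist (π j) (K'' : Set X) := by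
      intro K''
      have himg : A.image π ⊆ M := by rw [image_subset_iff]; exact hπM
      have hz : ∀ m ∈ M, m ∉ A.image π → w m * infDist m (K'' : Set X) = 0 := by
        intro m _ hmnot
        have : (A.filter fun j => π j = m) = ∅ := by
          rw [filter_eq_empty_iff]
          intro j hj hpj
          exact hmnot (mem_image.mpr ⟨j, hj, hpj⟩)
        rw [hw m, this]
        simp
      calc ∑ m ∈ M, w m * infDist m (K'' : Set X)
          = ∑ m ∈ A.image π, w m * infDist m (K'' : Set X) :=
            (Finset.sum_subset himg hz).symm
        _ = ∑ m ∈ A.image π,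
              (A.filter fun j => π j = m).card • infDist m (K'' : Set X) := by
            apply Finset.sum_congr rfl
            intro m _
            rw [hw m, nsmul_eq_mul]
        _ = ∑ j ∈ A, infDist (π j) (K'' : Set X) :=
            (Finset.sum_comp (fun m => infDist m (K'' : Set X)) π).symm
    -- step C: triangle inequality over A
    have stepC : ∑ j ∈ A, infDist (π j) (K' : Set X) ≤ L + c := by
      rw [hL, hc, ← Finset.sum_add_distrib]
      apply Finset.sum_le_sum
      intro j _
      have := infDist_le_infDist_add_dist (x := π j) (y := j) (s := (K' : Set X))
      rw [dist_comm (π j) j] at this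
      linarith
    have hw0 : ∀ m, 0 ≤ w m := by intro m; rw [hw]; positivity
    have hgK : g K ≤ 2 * (L + c) := by
      have h1 : g K ≤ ∑ m ∈ M, w m * (2 * infDist m (K' : Set X)) := by
        apply Finset.sum_le_sum
        intro m hm
        exact mul_le_mul_of_nonneg_left (stepA m hm) (hw0 m)
      have h2 : ∑ m ∈ M, w m * (2 * infDist m (K' : Set X))
          = 2 * ∑ m ∈ M, w m * infDist m (K' : Set X) := by
        rw [Finset.mul_sum]; apply Finset.sum_congr rfl; intro m _; ring
      calc g K ≤ 2 * ∑ m ∈ M, w m * infDist m (K' : Set X) := by rw [← h2]; exact h1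
        _ = 2 * ∑ j ∈ A, infDist (π j) (K' : Set X) := by rw [stepB]
        _ ≤ 2 * (L + c) := by linarith [stepC]
    exact le_trans (hK₀min K hKF) hgK
  -- conclude via le_csInf
  have hlb : g K₀ / 2 - L ≤ medCost A k 0 := by
    apply le_csInf hSne
    intro c hc
    have := key c hc
    linarith
  have : g K₀ ≤ 2 * (L + medCost A k 0) := by linarith
  exact this
end

section
/- Let X be a metric space, A a finite subset partitioned as A = A_1 ⊎ ⋯ ⊎ A_s with each A_i nonempty, and k ≥ 1 an integer. For each i let M_i ⊆ A_i be nonempty with |M_i| ≤ k and π_i : A_i → M_i an assignment; let π : A → M be the combined assignment with M = ∪_i M_i, let L = ∑_{j∈A} d(j, π(j)), and give each m ∈ M the weight w(m) = |{ j ∈ A : π(j) = m }|. Let γ ≥ 1 and suppose K ⊆ M is nonempty with |K| ≤ k and ∑_{m∈M} w(m)·d(m,K) ≤ γ · min { ∑_{m∈M} w(m)·d(m,K') : K' ⊆ M nonempty, |K'| ≤ k }. Then ∑_{j∈A} d(j,K) ≤ 2γ·( L + Cmed(A,k,0) ) + L. -/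
open Metric Finset

/-- Theorem 2.1 (consequence): a γ-approximate weighted k-median solution on the
preclustering centers yields a k-median solution on `A` of cost at most
`2γ(L + Cmed(A,k,0)) + L`. -/
theorem approx_weighted_solution_to_global {X : Type*} [MetricSpace X] [DecidableEq X]
    {s : ℕ} (hs : 0 < s) (𝒜 : Fin s → Finset X)
    (hdisj : ∀ i j, i ≠ j → Disjoint (𝒜 i) (𝒜 j))
    (hne : ∀ i, (𝒜 i).Nonempty)
    (A : Finset X) (hA : A = Finset.univ.biUnion 𝒜)
    (k : ℕ) (hk : 1 ≤ k)
    (Mi : Fin s → Finset X) (hMisub : ∀ i, Mi i ⊆ 𝒜 i)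
    (hMine : ∀ i, (Mi i).Nonempty) (hMicard : ∀ i, (Mi i).card ≤ k)
    (π : X → X) (hπ : ∀ i, ∀ j ∈ 𝒜 i, π j ∈ Mi i)
    (M : Finset X) (hM : M = Finset.univ.biUnion Mi)
    (L : ℝ) (hL : L = ∑ j ∈ A, dist j (π j))
    (w : X → ℝ) (hw : ∀ m, w m = ((A.filter fun j => π j = m).card : ℝ))
    (γ : ℝ) (hγ : 1 ≤ γ)
    (K : Finset X) (hKsub : K ⊆ M) (hKne : K.Nonempty) (hKcard : K.card ≤ k)
    (hKapprox : ∑ m ∈ M, w m * infDist m (K : Set X) ≤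
      γ * sInf { c : ℝ | ∃ K' : Finset X, K' ⊆ M ∧ K'.Nonempty ∧ K'.card ≤ k ∧
        c = ∑ m ∈ M, w m * infDist m (K' : Set X) }) :
    ∑ j ∈ A, infDist j (K : Set X) ≤ 2 * γ * (L + medCost A k 0) + L := by
  classical
  have i0 : Fin s := ⟨0, hs⟩
  have hAne : A.Nonempty := by
    obtain ⟨a, ha⟩ := hne i0
    exact ⟨a, by rw [hA]; exact Finset.mem_biUnion.2 ⟨i0, Finset.mem_univ _, ha⟩⟩
  have hMne : M.Nonempty := by
    obtain ⟨m, hm⟩ := hMine i0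
    exact ⟨m, by rw [hM]; exact Finset.mem_biUnion.2 ⟨i0, Finset.mem_univ _, hm⟩⟩
  have hπA : ∀ j ∈ A, π j ∈ M := by
    intro j hj
    rw [hA] at hj
    obtain ⟨i, -, hi⟩ := Finset.mem_biUnion.1 hj
    rw [hM]
    exact Finset.mem_biUnion.2 ⟨i, Finset.mem_univ _, hπ i j hi⟩
  -- rewrite the weighted cost as a sum over A
  have wsum : ∀ K' : Finset X, ∑ m ∈ M, w m * infDist m (K' : Set X)
      = ∑ j ∈ A, infDist (π j) (K' : Set X) := by
    intro K'
    rw [← Finset.sum_fiberwise_of_maps_to hπA (fun j => infDist (π j) (K' : Set X))]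
    refine Finset.sum_congr rfl fun m _ => ?_
    have hcongr : ∀ j ∈ A.filter (fun j => π j = m),
        infDist (π j) (K' : Set X) = infDist m (K' : Set X) := by
      intro j hj
      rw [(Finset.mem_filter.1 hj).2]
    rw [Finset.sum_congr rfl hcongr, Finset.sum_const, nsmul_eq_mul, hw]
  set Sw : Set ℝ := { c : ℝ | ∃ K' : Finset X, K' ⊆ M ∧ K'.Nonempty ∧ K'.card ≤ k ∧
      c = ∑ m ∈ M, w m * infDist m (K' : Set X) } with hSw
  have hSwne : Sw.Nonempty := ⟨_, K, hKsub, hKne, hKcard, rfl⟩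
  have hSwbd : BddBelow Sw := by
    refine ⟨0, fun c hc => ?_⟩
    obtain ⟨K', -, -, -, rfl⟩ := hc
    refine Finset.sum_nonneg fun m _ => mul_nonneg ?_ (infDist_nonneg)
    rw [hw]; positivity
  set Sc : Set ℝ := { c : ℝ | ∃ K' O : Finset X, K' ⊆ A ∧ K'.Nonempty ∧ K'.card ≤ k ∧
      O ⊆ A ∧ O.card ≤ 0 ∧ c = ∑ p ∈ A \ O, infDist p (K' : Set X) } with hSc
  have hScne : Sc.Nonempty := by
    obtain ⟨a, ha⟩ := hAne
    exact ⟨_, {a}, ∅, by simpa using ha, ⟨a, Finset.mem_singleton_self a⟩,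
      by simpa using hk, Finset.empty_subset _, by simp, rfl⟩
  -- key: the optimal weighted cost is at most 2(L + c) for each feasible global cost c
  have key : ∀ c ∈ Sc, sInf Sw ≤ 2 * (L + c) := by
    intro c hc
    obtain ⟨K', O, hK'A, hK'ne, hK'card, -, hOcard, hc⟩ := hc
    have hO : O = ∅ := Finset.card_eq_zero.1 (Nat.le_zero.1 hOcard)
    subst hO
    rw [Finset.sdiff_empty] at hc
    -- nearest point in M
    choose nr hnrM hnr using fun x => Finset.exists_min_image M (fun m => dist x m) hMne
    set K'' : Finset X := K'.image nr with hK''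
    have hK''sub : K'' ⊆ M := by
      intro x hx
      obtain ⟨y, -, rfl⟩ := Finset.mem_image.1 hx
      exact hnrM y
    have hK''ne : K''.Nonempty := hK'ne.image nr
    have hK''card : K''.card ≤ k := (Finset.card_image_le).trans hK'card
    have hmem : (∑ m ∈ M, w m * infDist m (K'' : Set X)) ∈ Sw :=
      ⟨K'', hK''sub, hK''ne, hK''card, rfl⟩
    refine (csInf_le hSwbd hmem).trans ?_
    rw [wsum K'']
    have hbound : ∀ j ∈ A, infDist (π j) (K'' : Set X)
        ≤ 2 * (dist j (π j) + infDist j (K' : Set X)) := by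
      intro j hj
      obtain ⟨cj, hcjK', hcj⟩ := (K'.finite_toSet.isCompact).exists_infDist_eq_dist
        (by exact_mod_cast hK'ne.to_set) j
      have hcjK'' : nr cj ∈ (K'' : Set X) := by
        exact_mod_cast Finset.mem_image_of_mem nr (by exact_mod_cast hcjK')
      have h1 : infDist (π j) (K'' : Set X) ≤ dist (π j) (nr cj) :=
        infDist_le_dist_of_mem hcjK''
      have h2 : dist (π j) (nr cj) ≤ dist (π j) cj + dist cj (nr cj) := dist_triangle _ _ _
      have h3 : dist cj (nr cj) ≤ dist cj (π j) := hnr cj (π j) (hπA j hj)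
      have h4 : dist (π j) cj ≤ dist (π j) j + dist j cj := dist_triangle _ _ _
      have h5 : dist (π j) j = dist j (π j) := dist_comm _ _
      have h6 : dist cj (π j) = dist (π j) cj := dist_comm _ _
      have h7 : dist j cj = infDist j (K' : Set X) := hcj.symm
      linarith
    calc ∑ j ∈ A, infDist (π j) (K'' : Set X)
        ≤ ∑ j ∈ A, 2 * (dist j (π j) + infDist j (K' : Set X)) :=
          Finset.sum_le_sum hbound
      _ = 2 * (L + c) := by
          rw [hc, hL]
          rw [← Finset.mul_sum, Finset.sum_add_distrib]
  have hWopt : sInf Sw ≤ 2 * (L + medCost A k 0) := by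
    have h1 : sInf Sw / 2 - L ≤ sInf Sc := by
      refine le_csInf hScne fun c hc => ?_
      have := key c hc
      linarith
    have h2 : medCost A k 0 = sInf Sc := rfl
    rw [h2]
    linarith
  -- final chain
  have hterm : ∀ j ∈ A, infDist j (K : Set X)
      ≤ infDist (π j) (K : Set X) + dist j (π j) :=
    fun j _ => infDist_le_infDist_add_dist
  have hmain : ∑ j ∈ A, infDist j (K : Set X)
      ≤ (∑ j ∈ A, infDist (π j) (K : Set X)) + L := by
    rw [hL, ← Finset.sum_add_distrib]
    exact Finset.sum_le_sum hterm
  have happ : ∑ j ∈ A, infDist (π j) (K : Set X) ≤ γ * sInf Sw := by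
    rw [← wsum K]; exact hKapprox
  have hγ0 : (0:ℝ) ≤ γ := by linarith
  have hchain : γ * sInf Sw ≤ γ * (2 * (L + medCost A k 0)) :=
    mul_le_mul_of_nonneg_left hWopt hγ0
  have hring : γ * (2 * (L + medCost A k 0)) = 2 * γ * (L + medCost A k 0) := by ring
  linarith
end

section
/- Let X be a metric space, A a finite subset partitioned as A = A_1 ⊎ ⋯ ⊎ A_s with each A_i nonempty, and k ≥ 1 an integer. For each i let M_i ⊆ A_i be nonempty with |M_i| ≤ k and π_i : A_i → M_i an assignment; let π : A → M be the combined assignment with M = ∪_i M_i and let L_∞ = max_{j∈A} d(j, π(j)). Then: (a) there exists a nonempty K ⊆ M with |K| ≤ k such that max_{m∈M} d(m,K) ≤ 2·( L_∞ + Ccen(A,k,0) ); and (b) for every nonempty K ⊆ M, max_{j∈A} d(j,K) ≤ max_{m∈M} d(m,K) + L_∞, where d(p,K) = min_{x∈K} d(p,x). -/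
open Metric Finset

private lemma bdd0 {X : Type*} [MetricSpace X] (T : Finset X) (f : X → ℝ) :
    BddAbove (insert 0 (f '' (T : Set X))) :=
  ((T.finite_toSet.image f).insert 0).bddAbove

private lemma le_sup0 {X : Type*} [MetricSpace X] {T : Finset X} (f : X → ℝ) {x : X}
    (hx : x ∈ T) : f x ≤ sSup (insert 0 (f '' (T : Set X))) :=
  le_csSup (bdd0 T f) (Set.mem_insert_of_mem _ ⟨x, hx, rfl⟩)

private lemma sup0_nonneg {X : Type*} [MetricSpace X] (T : Finset X) (f : X → ℝ) :
    0 ≤ sSup (insert 0 (f '' (T : Set X))) :=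
  le_csSup (bdd0 T f) (Set.mem_insert _ _)

private lemma sup0_le {X : Type*} [MetricSpace X] {T : Finset X} {f : X → ℝ} {b : ℝ}
    (h0 : 0 ≤ b) (h : ∀ x ∈ T, f x ≤ b) :
    sSup (insert 0 (f '' (T : Set X))) ≤ b := by
  apply csSup_le (Set.insert_nonempty _ _)
  rintro y (rfl | ⟨x, hx, rfl⟩)
  · exact h0
  · exact h x hx

/-- Corollary 2.2 (k-center extension of Theorem 2.1): (a) there is a k-center
solution on the preclustering centers of cost at most `2(L∞ + Ccen(A,k,0))`, and
(b) any center set `K ⊆ M` yields a global solution with cost increased by at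
most `L∞`. -/
theorem preclustering_center {X : Type*} [MetricSpace X] [DecidableEq X]
    {s : ℕ} (hs : 0 < s) (𝒜 : Fin s → Finset X)
    (hdisj : ∀ i j, i ≠ j → Disjoint (𝒜 i) (𝒜 j))
    (hne : ∀ i, (𝒜 i).Nonempty)
    (A : Finset X) (hA : A = Finset.univ.biUnion 𝒜)
    (k : ℕ) (hk : 1 ≤ k)
    (Mi : Fin s → Finset X) (hMisub : ∀ i, Mi i ⊆ 𝒜 i)
    (hMine : ∀ i, (Mi i).Nonempty) (hMicard : ∀ i, (Mi i).card ≤ k)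
    (π : X → X) (hπ : ∀ i, ∀ j ∈ 𝒜 i, π j ∈ Mi i)
    (M : Finset X) (hM : M = Finset.univ.biUnion Mi)
    (Linf : ℝ) (hLinf : Linf = sSup (insert 0 ((fun j => dist j (π j)) '' (A : Set X)))) :
    (∃ K : Finset X, K ⊆ M ∧ K.Nonempty ∧ K.card ≤ k ∧
      sSup (insert 0 ((fun m => infDist m (K : Set X)) '' (M : Set X))) ≤
        2 * (Linf + cenCost A k 0)) ∧
    (∀ K : Finset X, K ⊆ M → K.Nonempty →
      sSup (insert 0 ((fun j => infDist j (K : Set X)) '' (A : Set X))) ≤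
        sSup (insert 0 ((fun m => infDist m (K : Set X)) '' (M : Set X))) + Linf) := by

  -- basic facts
  have hMA : M ⊆ A := by
    intro m hm
    rw [hM] at hm
    rw [hA]
    obtain ⟨i, -, hmi⟩ := Finset.mem_biUnion.1 hm
    exact Finset.mem_biUnion.2 ⟨i, Finset.mem_univ i, hMisub i hmi⟩
  have hLnn : 0 ≤ Linf := by rw [hLinf]; exact sup0_nonneg A _
  have hdistL : ∀ j ∈ A, dist j (π j) ≤ Linf := by
    intro j hj; rw [hLinf]; exact le_sup0 (fun j => dist j (π j)) hj
  have hπM : ∀ j ∈ A, π j ∈ M := by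
    intro j hj
    rw [hA] at hj
    obtain ⟨i, -, hji⟩ := Finset.mem_biUnion.1 hj
    rw [hM]
    exact Finset.mem_biUnion.2 ⟨i, Finset.mem_univ i, hπ i j hji⟩
  constructor
  · -- part (a)
    set cset := { c : ℝ | ∃ K O : Finset X, K ⊆ A ∧ K.Nonempty ∧ K.card ≤ k ∧
      O ⊆ A ∧ O.card ≤ 0 ∧
      c = sSup (insert 0 ((fun p => infDist p (K : Set X)) '' ((A \ O : Finset X) : Set X))) }
      with hcset
    have hAne : A.Nonempty := by
      obtain ⟨a, ha⟩ := hne ⟨0, hs⟩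
      exact ⟨a, hA ▸ Finset.mem_biUnion.2 ⟨⟨0, hs⟩, Finset.mem_univ _, ha⟩⟩
    obtain ⟨a0, ha0⟩ := hAne
    have hne' : cset.Nonempty := by
      refine ⟨_, {a0}, ∅, by simpa using ha0, Finset.singleton_nonempty a0, by simpa using hk,
        Finset.empty_subset A, by simp, rfl⟩
    have hfin : cset.Finite := by
      apply Set.Finite.subset (Set.Finite.image
        (fun p : Finset X × Finset X =>
          sSup (insert 0 ((fun q => infDist q (p.1 : Set X)) '' ((A \ p.2 : Finset X) : Set X))))
        ((A.powerset ×ˢ A.powerset).finite_toSet))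
      rintro c ⟨K, O, hK, -, -, hO, -, rfl⟩
      exact ⟨(K, O), by simp [hK, hO], rfl⟩
    have hmem : cenCost A k 0 ∈ cset := by
      have := hne'.csInf_mem hfin
      simpa [cenCost, hcset] using this
    obtain ⟨K₀, O, hK₀A, hK₀ne, hK₀card, hOA, hOcard, hc⟩ := hmem
    have hO : O = ∅ := Finset.card_eq_zero.1 (Nat.le_zero.1 hOcard)
    subst hO
    rw [Finset.sdiff_empty] at hc
    set c := cenCost A k 0 with hcc
    have hcnn : 0 ≤ c := by rw [hc]; exact sup0_nonneg A _
    have hcle : ∀ m ∈ A, infDist m (K₀ : Set X) ≤ c := by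
      intro m hm; rw [hc]; exact le_sup0 (fun p => infDist p (K₀ : Set X)) hm
    refine ⟨K₀.image π, ?_, hK₀ne.image π, le_trans (Finset.card_image_le) hK₀card, ?_⟩
    · intro y hy
      obtain ⟨x, hx, rfl⟩ := Finset.mem_image.1 hy
      exact hπM x (hK₀A hx)
    · apply sup0_le (by linarith)
      intro m hm
      obtain ⟨x, hxK₀, hxd⟩ :=
        (K₀.finite_toSet.isCompact).exists_infDist_eq_dist (by exact_mod_cast hK₀ne) m
      have h1 : infDist m ((K₀.image π : Finset X) : Set X) ≤ dist m (π x) :=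
        infDist_le_dist_of_mem (by exact_mod_cast Finset.mem_image_of_mem π hxK₀)
      have h2 : dist m (π x) ≤ dist m x + dist x (π x) := dist_triangle _ _ _
      have h3 : dist x (π x) ≤ Linf := hdistL x (hK₀A hxK₀)
      have h4 : dist m x ≤ c := by rw [← hxd]; exact hcle m (hMA hm)
      linarith
  · -- part (b)
    intro K hKM hKne
    have hsm : 0 ≤ sSup (insert 0 ((fun m => infDist m (K : Set X)) '' (M : Set X))) :=
      sup0_nonneg M _
    apply sup0_le (by linarith)
    intro j hj
    have h1 : infDist j (K : Set X) ≤ infDist (π j) (K : Set X) + dist j (π j) :=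
      infDist_le_infDist_add_dist
    have h2 : infDist (π j) (K : Set X) ≤
        sSup (insert 0 ((fun m => infDist m (K : Set X)) '' (M : Set X))) :=
      le_sup0 (fun m => infDist m (K : Set X)) (hπM j hj)
    have h3 := hdistL j hj
    linarith
end

section
/- Let (P,d) be a metric space, S_P a finite nonempty subset of P, and w : S_P → ℝ a probability weight function (w(p) ≥ 0 for all p and ∑_{p∈S_P} w(p) = 1); write E_w[f] = ∑_{p∈S_P} w(p)·f(p) for f : P → ℝ. Let τ ≥ 0, let c ∈ P, and let c' ∈ P satisfy d(c,c') ≤ d(c,x) for every x ∈ S_P with w(x) > 0. Then E_w[L_{2τ}(·, c')] ≤ 2·E_w[L_τ(·, c)], where L_τ(u,v) = max(d(u,v) − τ, 0). -/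
open Metric Finset

/-- Replacing a center `c` by its nearest point `c'` among the support of a
distribution at most doubles the expected truncated distance, when the truncation
parameter is doubled (key step in the proof of Lemma 5.11). -/
theorem expected_truncated_dist_nearest_center {P : Type*} [MetricSpace P]
    (SP : Finset P) (hSP : SP.Nonempty)
    (w : P → ℝ) (hw0 : ∀ p ∈ SP, 0 ≤ w p) (hw1 : ∑ p ∈ SP, w p = 1)
    (τ : ℝ) (hτ : 0 ≤ τ) (c c' : P)
    (hc' : ∀ x ∈ SP, 0 < w x → dist c c' ≤ dist c x) :
    ∑ p ∈ SP, w p * max (dist p c' - 2 * τ) 0 ≤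
      2 * ∑ p ∈ SP, w p * max (dist p c - τ) 0 := by
  rw [Finset.mul_sum]
  apply Finset.sum_le_sum
  intro p hp
  rcases (hw0 p hp).lt_or_eq with h | h
  · have hd : dist p c' ≤ 2 * dist p c := by
      have h1 := dist_triangle p c c'
      have h2 := hc' p hp h
      rw [dist_comm c p] at h2
      linarith
    have : max (dist p c' - 2 * τ) 0 ≤ 2 * max (dist p c - τ) 0 := by
      rcases le_total (dist p c' - 2 * τ) 0 with h3 | h3
      · simpa [max_eq_right h3] using mul_nonneg (by norm_num : (0:ℝ) ≤ 2) (le_max_right _ _)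
      · rw [max_eq_left h3]
        have : dist p c' - 2 * τ ≤ 2 * (dist p c - τ) := by linarith
        calc dist p c' - 2 * τ ≤ 2 * (dist p c - τ) := this
          _ ≤ 2 * max (dist p c - τ) 0 := by
              apply mul_le_mul_of_nonneg_left (le_max_left _ _) (by norm_num)
    calc w p * max (dist p c' - 2 * τ) 0 ≤ w p * (2 * max (dist p c - τ) 0) :=
          mul_le_mul_of_nonneg_left this h.le
      _ = 2 * (w p * max (dist p c - τ) 0) := by ring
  · simp [← h]
end
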